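/- arXiv:2208.12647 — 6 statements merged into one kernel-verified Lean document; each statement's English description precedes it below -/
import Mathlib

section
/- Let g be a vector space with two 3-Lie algebra structures [·,·,·] and {·,·,·}. Then (g,[·,·,·],{·,·,·}) is a compatible 3-Lie algebra (i.e., the compatibility identity (2.4) holds) if and only if for all scalars k₁, k₂, the bracket ⟦x,y,z⟧ = k₁[x,y,z] + k₂{x,y,z} is a 3-Lie algebra structure on g. -/
section Defs

/-- A map `G × G × G → H` is trilinear if it is linear in each argument. -/
def IsTrilinearMap (K : Type*) {G H : Type*} [Field K] [AddCommGroup G] [Module K G]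
    [AddCommGroup H] [Module K H] (b : G → G → G → H) : Prop :=
  (∀ y z, IsLinearMap K (fun x => b x y z)) ∧
  (∀ x z, IsLinearMap K (fun y => b x y z)) ∧
  (∀ x y, IsLinearMap K (fun z => b x y z))

/-- Skew-symmetry of a ternary bracket. -/
def IsSkewSym {G H : Type*} [AddCommGroup G] [AddCommGroup H] (b : G → G → G → H) : Prop :=
  (∀ x y z, b x y z = - b y x z) ∧ (∀ x y z, b x y z = - b x z y)

/-- The Fundamental Identity of a 3-Lie algebra. -/
def FundIdent {G : Type*} [AddCommGroup G] (b : G → G → G → G) : Prop :=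
  ∀ x₁ x₂ x₃ x₄ x₅, b x₁ x₂ (b x₃ x₄ x₅) =
    b (b x₁ x₂ x₃) x₄ x₅ + b x₃ (b x₁ x₂ x₄) x₅ + b x₃ x₄ (b x₁ x₂ x₅)

/-- A 3-Lie algebra structure: a skew-symmetric trilinear bracket satisfying
the Fundamental Identity. -/
def Is3Lie (K : Type*) {G : Type*} [Field K] [AddCommGroup G] [Module K G]
    (b : G → G → G → G) : Prop :=
  IsTrilinearMap K b ∧ IsSkewSym b ∧ FundIdent b

/-- The compatibility condition (2.4) between two ternary brackets. -/
def Compat {G : Type*} [AddCommGroup G] (b₁ b₂ : G → G → G → G) : Prop :=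
  ∀ x₁ x₂ x₃ x₄ x₅,
    b₁ x₁ x₂ (b₂ x₃ x₄ x₅) + b₂ x₁ x₂ (b₁ x₃ x₄ x₅) =
    b₁ (b₂ x₁ x₂ x₃) x₄ x₅ + b₂ (b₁ x₁ x₂ x₃) x₄ x₅
    + b₁ x₃ (b₂ x₁ x₂ x₄) x₅ + b₂ x₃ (b₁ x₁ x₂ x₄) x₅
    + b₁ x₃ x₄ (b₂ x₁ x₂ x₅) + b₂ x₃ x₄ (b₁ x₁ x₂ x₅)

/-- The linear combination `k₁ • b₁ + k₂ • b₂` of two ternary brackets. -/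
def combBracket {K G : Type*} [Field K] [AddCommGroup G] [Module K G]
    (k₁ k₂ : K) (b₁ b₂ : G → G → G → G) : G → G → G → G :=
  fun x y z => k₁ • b₁ x y z + k₂ • b₂ x y z

/-- Nijenhuis operator condition for a ternary bracket. -/
def IsNijenhuis {K G : Type*} [Field K] [AddCommGroup G] [Module K G]
    (b : G → G → G → G) (N : G →ₗ[K] G) : Prop :=
  ∀ x y z, b (N x) (N y) (N z) =
    N (b (N x) (N y) z + b x (N y) (N z) + b (N x) y (N z)
      - N (b (N x) y z) - N (b x (N y) z) - N (b x y (N z)) + N (N (b x y z)))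

/-- The deformed bracket `[·,·,·]_N` associated to a linear map `N`. -/
def deformedBracket {K G : Type*} [Field K] [AddCommGroup G] [Module K G]
    (b : G → G → G → G) (N : G →ₗ[K] G) : G → G → G → G :=
  fun x y z =>
    b (N x) (N y) z + b x (N y) (N z) + b (N x) y (N z)
      - N (b (N x) y z) - N (b x (N y) z) - N (b x y (N z)) + N (N (b x y z))

/-- The mixed (degree one) compatibility/cocycle condition between two brackets
`b₁, b₂` and two 2-cochains `w₁, w₂`: the sum of the mixed versions of the
compatibility condition. -/
def MixedCocycleCond {G : Type*} [AddCommGroup G]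
    (b₁ b₂ w₁ w₂ : G → G → G → G) : Prop :=
  ∀ x₁ x₂ x₃ x₄ x₅,
    b₁ x₁ x₂ (w₂ x₃ x₄ x₅) + w₂ x₁ x₂ (b₁ x₃ x₄ x₅)
    + b₂ x₁ x₂ (w₁ x₃ x₄ x₅) + w₁ x₁ x₂ (b₂ x₃ x₄ x₅) =
    b₁ (w₂ x₁ x₂ x₃) x₄ x₅ + w₂ (b₁ x₁ x₂ x₃) x₄ x₅
    + b₂ (w₁ x₁ x₂ x₃) x₄ x₅ + w₁ (b₂ x₁ x₂ x₃) x₄ x₅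
    + b₁ x₃ (w₂ x₁ x₂ x₄) x₅ + w₂ x₃ (b₁ x₁ x₂ x₄) x₅
    + b₂ x₃ (w₁ x₁ x₂ x₄) x₅ + w₁ x₃ (b₂ x₁ x₂ x₄) x₅
    + b₁ x₃ x₄ (w₂ x₁ x₂ x₅) + w₂ x₃ x₄ (b₁ x₁ x₂ x₅)
    + b₂ x₃ x₄ (w₁ x₁ x₂ x₅) + w₁ x₃ x₄ (b₂ x₁ x₂ x₅)

/-- `ρ : Λ²g → gl(V)` as a skew-symmetric bilinear map into endomorphisms. -/
def IsRepMap (K : Type*) {G V : Type*} [Field K] [AddCommGroup G] [Module K G]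
    [AddCommGroup V] [Module K V] (ρ : G → G → Module.End K V) : Prop :=
  (∀ y, IsLinearMap K (fun x => ρ x y)) ∧ (∀ x, IsLinearMap K (fun y => ρ x y)) ∧
  (∀ x y, ρ x y = - ρ y x)

/-- The representation conditions of a 3-Lie algebra. -/
def Is3LieRep {K G V : Type*} [Field K] [AddCommGroup G] [Module K G]
    [AddCommGroup V] [Module K V] (b : G → G → G → G)
    (ρ : G → G → Module.End K V) : Prop :=
  (∀ x₁ x₂ x₃ x₄, ρ x₁ x₂ * ρ x₃ x₄ =
      ρ (b x₁ x₂ x₃) x₄ + ρ x₃ (b x₁ x₂ x₄) + ρ x₃ x₄ * ρ x₁ x₂) ∧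
  (∀ x₁ x₂ x₃ x₄, ρ x₁ (b x₂ x₃ x₄) =
      ρ x₃ x₄ * ρ x₁ x₂ - ρ x₂ x₄ * ρ x₁ x₃ + ρ x₂ x₃ * ρ x₁ x₄)

/-- The two mixed compatibility identities of a representation of a compatible
3-Lie algebra. -/
def CompatRep {K G V : Type*} [Field K] [AddCommGroup G] [Module K G]
    [AddCommGroup V] [Module K V] (b₁ b₂ : G → G → G → G)
    (ρ μ : G → G → Module.End K V) : Prop :=
  (∀ x₁ x₂ x₃ x₄,
    ρ (b₂ x₁ x₂ x₃) x₄ + μ (b₁ x₁ x₂ x₃) x₄ + ρ x₃ (b₂ x₁ x₂ x₄) + μ x₃ (b₁ x₁ x₂ x₄)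
      = (ρ x₁ x₂ * μ x₃ x₄ - μ x₃ x₄ * ρ x₁ x₂)
        - (ρ x₃ x₄ * μ x₁ x₂ - μ x₁ x₂ * ρ x₃ x₄)) ∧
  (∀ x₁ x₂ x₃ x₄,
    ρ (b₂ x₁ x₂ x₃) x₄ + μ (b₁ x₁ x₂ x₃) x₄ - ρ x₃ x₁ * μ x₂ x₄ - μ x₃ x₁ * ρ x₂ x₄
      = ρ x₁ x₂ * μ x₃ x₄ + μ x₁ x₂ * ρ x₃ x₄ + ρ x₂ x₃ * μ x₁ x₄ + μ x₂ x₃ * ρ x₁ x₄)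

/-- The semidirect product bracket on `g ⊕ V`. -/
def sdBracket {K G V : Type*} [Field K] [AddCommGroup G] [Module K G]
    [AddCommGroup V] [Module K V] (b : G → G → G → G)
    (ρ : G → G → Module.End K V) : G × V → G × V → G × V → G × V :=
  fun p q r => (b p.1 q.1 r.1, ρ p.1 q.1 r.2 + ρ q.1 r.1 p.2 + ρ r.1 p.1 q.2)

/-- The 2-cocycle expression of a 2-cochain `w` with coefficients in a
representation `ρ` of the 3-Lie algebra `(g,b)`. -/
def CocycleExpr {K G V : Type*} [Field K] [AddCommGroup G] [Module K G]
    [AddCommGroup V] [Module K V] (b : G → G → G → G)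
    (ρ : G → G → Module.End K V) (w : G → G → G → V) (x₁ x₂ x₃ x₄ x₅ : G) : V :=
  w x₁ x₂ (b x₃ x₄ x₅) - w (b x₁ x₂ x₃) x₄ x₅ - w x₃ (b x₁ x₂ x₄) x₅
    - w x₃ x₄ (b x₁ x₂ x₅)
  + ρ x₁ x₂ (w x₃ x₄ x₅) - ρ x₃ x₄ (w x₁ x₂ x₅) - ρ x₄ x₅ (w x₁ x₂ x₃)
    - ρ x₅ x₃ (w x₁ x₂ x₄)

/-- The bracket on `g ⊕ V` twisted by a 2-cochain `w`. -/
def extBracket {K G V : Type*} [Field K] [AddCommGroup G] [Module K G]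
    [AddCommGroup V] [Module K V] (b : G → G → G → G)
    (ρ : G → G → Module.End K V) (w : G → G → G → V) :
    G × V → G × V → G × V → G × V :=
  fun p q r => (b p.1 q.1 r.1,
    ρ p.1 q.1 r.2 + ρ q.1 r.1 p.2 + ρ r.1 p.1 q.2 + w p.1 q.1 r.1)

end Defs

section Aux
variable {K G : Type*} [Field K] [AddCommGroup G] [Module K G]

lemma tri_add3 {b : G → G → G → G} (h : IsTrilinearMap K b) (x y u v : G) :
    b x y (u + v) = b x y u + b x y v := (h.2.2 x y).map_add u v

lemma tri_smul3 {b : G → G → G → G} (h : IsTrilinearMap K b) (c : K) (x y u : G) :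
    b x y (c • u) = c • b x y u := (h.2.2 x y).map_smul c u

lemma tri_add1 {b : G → G → G → G} (h : IsTrilinearMap K b) (u v y z : G) :
    b (u + v) y z = b u y z + b v y z := (h.1 y z).map_add u v

lemma tri_smul1 {b : G → G → G → G} (h : IsTrilinearMap K b) (c : K) (u y z : G) :
    b (c • u) y z = c • b u y z := (h.1 y z).map_smul c u

lemma tri_add2 {b : G → G → G → G} (h : IsTrilinearMap K b) (x u v z : G) :
    b x (u + v) z = b x u z + b x v z := (h.2.1 x z).map_add u v

lemma tri_smul2 {b : G → G → G → G} (h : IsTrilinearMap K b) (c : K) (x u z : G) :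
    b x (c • u) z = c • b x u z := (h.2.1 x z).map_smul c u

end Aux


theorem stmt0 {K G : Type*} [Field K] [CharZero K] [AddCommGroup G] [Module K G]
    (b₁ b₂ : G → G → G → G) (h₁ : Is3Lie K b₁) (h₂ : Is3Lie K b₂) :
    Compat b₁ b₂ ↔ ∀ k₁ k₂ : K, Is3Lie K (combBracket k₁ k₂ b₁ b₂) := by
  obtain ⟨t₁, s₁, f₁⟩ := h₁
  obtain ⟨t₂, s₂, f₂⟩ := h₂
  constructor
  · intro hc k₁ k₂
    refine ⟨⟨?_, ?_, ?_⟩, ⟨?_, ?_⟩, ?_⟩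
    · intro y z
      exact ⟨fun u v => by simp [combBracket, tri_add1 t₁, tri_add1 t₂, smul_add]; abel,
        fun c u => by simp [combBracket, tri_smul1 t₁, tri_smul1 t₂, smul_comm c, smul_add]⟩
    · intro x z
      exact ⟨fun u v => by simp [combBracket, tri_add2 t₁, tri_add2 t₂, smul_add]; abel,
        fun c u => by simp [combBracket, tri_smul2 t₁, tri_smul2 t₂, smul_comm c, smul_add]⟩
    · intro x y
      exact ⟨fun u v => by simp [combBracket, tri_add3 t₁, tri_add3 t₂, smul_add]; abel,
        fun c u => by simp [combBracket, tri_smul3 t₁, tri_smul3 t₂, smul_comm c, smul_add]⟩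
    · intro x y z
      simp only [combBracket, s₁.1 x y z, s₂.1 x y z, smul_neg, neg_add]
    · intro x y z
      simp only [combBracket, s₁.2 x y z, s₂.2 x y z, smul_neg, neg_add]
    · intro x₁ x₂ x₃ x₄ x₅
      simp only [combBracket,
        tri_add3 t₁, tri_smul3 t₁, tri_add3 t₂, tri_smul3 t₂,
        tri_add2 t₁, tri_smul2 t₁, tri_add2 t₂, tri_smul2 t₂,
        tri_add1 t₁, tri_smul1 t₁, tri_add1 t₂, tri_smul1 t₂]
      linear_combination (norm := module)
        (k₁ * k₁) • f₁ x₁ x₂ x₃ x₄ x₅ + (k₂ * k₂) • f₂ x₁ x₂ x₃ x₄ x₅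
        + (k₁ * k₂) • hc x₁ x₂ x₃ x₄ x₅
  · intro h x₁ x₂ x₃ x₄ x₅
    have hf := (h 1 1).2.2 x₁ x₂ x₃ x₄ x₅
    simp only [combBracket, one_smul,
      tri_add3 t₁, tri_add3 t₂, tri_add2 t₁, tri_add2 t₂, tri_add1 t₁, tri_add1 t₂] at hf
    linear_combination (norm := abel) hf - f₁ x₁ x₂ x₃ x₄ x₅ - f₂ x₁ x₂ x₃ x₄ x₅
end

section
/- Let g be a 4-dimensional vector space with basis e₁,e₂,e₃,e₄. Define two skew-symmetric trilinear brackets by [e₁,e₂,e₃] = e₁ (all other basis brackets zero) and {e₂,e₃,e₄} = e₁ (all other basis brackets zero). Then (g,[·,·,·],{·,·,·}) is a compatible 3-Lie algebra. -/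
private lemma my_alt {K G : Type*} [Field K] [CharZero K] [AddCommGroup G] [Module K G]
    {b : G → G → G → G} (hs : IsSkewSym b) :
    (∀ x z, b x x z = 0) ∧ (∀ x y, b x y y = 0) ∧ (∀ x y, b x y x = 0) := by
  have key : ∀ v : G, v = -v → v = 0 := by
    intro v hv
    have h2 : (2 : K) • v = 0 := by
      rw [two_smul]
      nth_rewrite 1 [hv]
      exact neg_add_cancel v
    rcases smul_eq_zero.mp h2 with h | h
    · exact absurd h two_ne_zero
    · exact h
  refine ⟨fun x z => key _ (hs.1 x x z), fun x y => key _ (hs.2 x y y), fun x y => ?_⟩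
  rw [hs.2 x y x, key _ (hs.1 x x y), neg_zero]

private lemma lin_sum {K G : Type*} [Field K] [AddCommGroup G] [Module K G]
    {f : G → G} (hf : IsLinearMap K f) (c : Fin 4 → K) (v : Fin 4 → G) :
    f (∑ i, c i • v i) = ∑ i, c i • f (v i) := by
  calc f (∑ i, c i • v i) = IsLinearMap.mk' f hf (∑ i, c i • v i) := rfl
    _ = ∑ i, c i • f (v i) := by rw [map_sum]; simp

private lemma tri_expand {K G : Type*} [Field K] [AddCommGroup G] [Module K G]
    (e : Module.Basis (Fin 4) K G) {b : G → G → G → G} (ht : IsTrilinearMap K b) (x y z : G) :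
    b x y z = ∑ i, ∑ j, ∑ k,
      e.repr x i • e.repr y j • e.repr z k • b (e i) (e j) (e k) := by
  have h1 : b x y z = ∑ i, e.repr x i • b (e i) y z := by
    conv_lhs => rw [← e.sum_repr x]
    exact lin_sum (ht.1 y z) _ _
  have h2 : ∀ u : G, b u y z = ∑ j, e.repr y j • b u (e j) z := by
    intro u
    conv_lhs => rw [← e.sum_repr y]
    exact lin_sum (ht.2.1 u z) _ _
  have h3 : ∀ u w : G, b u w z = ∑ k, e.repr z k • b u w (e k) := by
    intro u w
    conv_lhs => rw [← e.sum_repr z]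
    exact lin_sum (ht.2.2 u w) _ _
  rw [h1]
  simp only [h2, h3, Finset.smul_sum]

set_option maxHeartbeats 2000000 in
theorem stmt1 {K G : Type*} [Field K] [CharZero K] [AddCommGroup G] [Module K G]
    (e : Module.Basis (Fin 4) K G) (b₁ b₂ : G → G → G → G)
    (ht₁ : IsTrilinearMap K b₁) (hs₁ : IsSkewSym b₁)
    (ht₂ : IsTrilinearMap K b₂) (hs₂ : IsSkewSym b₂)
    (h₁ : b₁ (e 0) (e 1) (e 2) = e 0)
    (h₁z : ∀ i j k : Fin 4, i < j → j < k → ¬(i = 0 ∧ j = 1 ∧ k = 2) →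
      b₁ (e i) (e j) (e k) = 0)
    (h₂ : b₂ (e 1) (e 2) (e 3) = e 0)
    (h₂z : ∀ i j k : Fin 4, i < j → j < k → ¬(i = 1 ∧ j = 2 ∧ k = 3) →
      b₂ (e i) (e j) (e k) = 0) :
    Is3Lie K b₁ ∧ Is3Lie K b₂ ∧ Compat b₁ b₂ := by
  obtain ⟨a1, a2, a3⟩ := my_alt (K := K) hs₁
  obtain ⟨c1, c2, c3⟩ := my_alt (K := K) hs₂
  have z013 : b₁ (e 0) (e 1) (e 3) = 0 := h₁z 0 1 3 (by decide) (by decide) (by decide)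
  have z023 : b₁ (e 0) (e 2) (e 3) = 0 := h₁z 0 2 3 (by decide) (by decide) (by decide)
  have z123 : b₁ (e 1) (e 2) (e 3) = 0 := h₁z 1 2 3 (by decide) (by decide) (by decide)
  have z012 : b₂ (e 0) (e 1) (e 2) = 0 := h₂z 0 1 2 (by decide) (by decide) (by decide)
  have z013b : b₂ (e 0) (e 1) (e 3) = 0 := h₂z 0 1 3 (by decide) (by decide) (by decide)
  have z023b : b₂ (e 0) (e 2) (e 3) = 0 := h₂z 0 2 3 (by decide) (by decide) (by decide)
  have va_013 : b₁ (e 0) (e 1) (e 3) = 0 := by rw [z013]; try simp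
  have va_021 : b₁ (e 0) (e 2) (e 1) = -(e 0) := by rw [hs₁.2, h₁]; try simp
  have va_023 : b₁ (e 0) (e 2) (e 3) = 0 := by rw [z023]; try simp
  have va_031 : b₁ (e 0) (e 3) (e 1) = 0 := by rw [hs₁.2, z013]; try simp
  have va_032 : b₁ (e 0) (e 3) (e 2) = 0 := by rw [hs₁.2, z023]; try simp
  have va_102 : b₁ (e 1) (e 0) (e 2) = -(e 0) := by rw [hs₁.1, h₁]; try simp
  have va_103 : b₁ (e 1) (e 0) (e 3) = 0 := by rw [hs₁.1, z013]; try simp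
  have va_120 : b₁ (e 1) (e 2) (e 0) = e 0 := by rw [hs₁.2, hs₁.1, h₁]; try simp
  have va_123 : b₁ (e 1) (e 2) (e 3) = 0 := by rw [z123]; try simp
  have va_130 : b₁ (e 1) (e 3) (e 0) = 0 := by rw [hs₁.2, hs₁.1, z013]; try simp
  have va_132 : b₁ (e 1) (e 3) (e 2) = 0 := by rw [hs₁.2, z123]; try simp
  have va_201 : b₁ (e 2) (e 0) (e 1) = e 0 := by rw [hs₁.1, hs₁.2, h₁]; try simp
  have va_203 : b₁ (e 2) (e 0) (e 3) = 0 := by rw [hs₁.1, z023]; try simp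
  have va_210 : b₁ (e 2) (e 1) (e 0) = -(e 0) := by rw [hs₁.1, hs₁.2, hs₁.1, h₁]; try simp
  have va_213 : b₁ (e 2) (e 1) (e 3) = 0 := by rw [hs₁.1, z123]; try simp
  have va_230 : b₁ (e 2) (e 3) (e 0) = 0 := by rw [hs₁.2, hs₁.1, z023]; try simp
  have va_231 : b₁ (e 2) (e 3) (e 1) = 0 := by rw [hs₁.2, hs₁.1, z123]; try simp
  have va_301 : b₁ (e 3) (e 0) (e 1) = 0 := by rw [hs₁.1, hs₁.2, z013]; try simp
  have va_302 : b₁ (e 3) (e 0) (e 2) = 0 := by rw [hs₁.1, hs₁.2, z023]; try simp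
  have va_310 : b₁ (e 3) (e 1) (e 0) = 0 := by rw [hs₁.1, hs₁.2, hs₁.1, z013]; try simp
  have va_312 : b₁ (e 3) (e 1) (e 2) = 0 := by rw [hs₁.1, hs₁.2, z123]; try simp
  have va_320 : b₁ (e 3) (e 2) (e 0) = 0 := by rw [hs₁.1, hs₁.2, hs₁.1, z023]; try simp
  have va_321 : b₁ (e 3) (e 2) (e 1) = 0 := by rw [hs₁.1, hs₁.2, hs₁.1, z123]; try simp
  have vb_012 : b₂ (e 0) (e 1) (e 2) = 0 := by rw [z012]; try simp
  have vb_013 : b₂ (e 0) (e 1) (e 3) = 0 := by rw [z013b]; try simp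
  have vb_021 : b₂ (e 0) (e 2) (e 1) = 0 := by rw [hs₂.2, z012]; try simp
  have vb_023 : b₂ (e 0) (e 2) (e 3) = 0 := by rw [z023b]; try simp
  have vb_031 : b₂ (e 0) (e 3) (e 1) = 0 := by rw [hs₂.2, z013b]; try simp
  have vb_032 : b₂ (e 0) (e 3) (e 2) = 0 := by rw [hs₂.2, z023b]; try simp
  have vb_102 : b₂ (e 1) (e 0) (e 2) = 0 := by rw [hs₂.1, z012]; try simp
  have vb_103 : b₂ (e 1) (e 0) (e 3) = 0 := by rw [hs₂.1, z013b]; try simp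
  have vb_120 : b₂ (e 1) (e 2) (e 0) = 0 := by rw [hs₂.2, hs₂.1, z012]; try simp
  have vb_130 : b₂ (e 1) (e 3) (e 0) = 0 := by rw [hs₂.2, hs₂.1, z013b]; try simp
  have vb_132 : b₂ (e 1) (e 3) (e 2) = -(e 0) := by rw [hs₂.2, h₂]; try simp
  have vb_201 : b₂ (e 2) (e 0) (e 1) = 0 := by rw [hs₂.1, hs₂.2, z012]; try simp
  have vb_203 : b₂ (e 2) (e 0) (e 3) = 0 := by rw [hs₂.1, z023b]; try simp
  have vb_210 : b₂ (e 2) (e 1) (e 0) = 0 := by rw [hs₂.1, hs₂.2, hs₂.1, z012]; try simp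
  have vb_213 : b₂ (e 2) (e 1) (e 3) = -(e 0) := by rw [hs₂.1, h₂]; try simp
  have vb_230 : b₂ (e 2) (e 3) (e 0) = 0 := by rw [hs₂.2, hs₂.1, z023b]; try simp
  have vb_231 : b₂ (e 2) (e 3) (e 1) = e 0 := by rw [hs₂.2, hs₂.1, h₂]; try simp
  have vb_301 : b₂ (e 3) (e 0) (e 1) = 0 := by rw [hs₂.1, hs₂.2, z013b]; try simp
  have vb_302 : b₂ (e 3) (e 0) (e 2) = 0 := by rw [hs₂.1, hs₂.2, z023b]; try simp
  have vb_310 : b₂ (e 3) (e 1) (e 0) = 0 := by rw [hs₂.1, hs₂.2, hs₂.1, z013b]; try simp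
  have vb_312 : b₂ (e 3) (e 1) (e 2) = e 0 := by rw [hs₂.1, hs₂.2, h₂]; try simp
  have vb_320 : b₂ (e 3) (e 2) (e 0) = 0 := by rw [hs₂.1, hs₂.2, hs₂.1, z023b]; try simp
  have vb_321 : b₂ (e 3) (e 2) (e 1) = -(e 0) := by rw [hs₂.1, hs₂.2, hs₂.1, h₂]; try simp
  have key1 : ∀ x y z : G, b₁ x y z = (e.repr x 0 * (e.repr y 1 * e.repr z 2) - e.repr x 0 * (e.repr y 2 * e.repr z 1) - e.repr x 1 * (e.repr y 0 * e.repr z 2) + e.repr x 1 * (e.repr y 2 * e.repr z 0) + e.repr x 2 * (e.repr y 0 * e.repr z 1) - e.repr x 2 * (e.repr y 1 * e.repr z 0)) • e 0 := by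
    intro x y z
    rw [tri_expand e ht₁]
    simp only [Fin.sum_univ_four, a1, a2, a3, h₁, va_013, va_021, va_023, va_031, va_032, va_102, va_103, va_120, va_123, va_130, va_132, va_201, va_203, va_210, va_213, va_230, va_231, va_301, va_302, va_310, va_312, va_320, va_321, smul_zero, smul_neg,
      add_zero, zero_add]
    module
  have key2 : ∀ x y z : G, b₂ x y z = (e.repr x 1 * (e.repr y 2 * e.repr z 3) - e.repr x 1 * (e.repr y 3 * e.repr z 2) - e.repr x 2 * (e.repr y 1 * e.repr z 3) + e.repr x 2 * (e.repr y 3 * e.repr z 1) + e.repr x 3 * (e.repr y 1 * e.repr z 2) - e.repr x 3 * (e.repr y 2 * e.repr z 1)) • e 0 := by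
    intro x y z
    rw [tri_expand e ht₂]
    simp only [Fin.sum_univ_four, c1, c2, c3, h₂, vb_012, vb_013, vb_021, vb_023, vb_031, vb_032, vb_102, vb_103, vb_120, vb_130, vb_132, vb_201, vb_203, vb_210, vb_213, vb_230, vb_231, vb_301, vb_302, vb_310, vb_312, vb_320, vb_321, smul_zero, smul_neg,
      add_zero, zero_add]
    module
  have FI1 : FundIdent b₁ := by
    intro x1 x2 x3 x4 x5
    simp only [key1]
    simp only [map_smul, Finsupp.smul_apply, Module.Basis.repr_self, Finsupp.single_apply,
      smul_eq_mul, Fin.isValue, Fin.reduceEq, if_true, if_false, ite_true, ite_false,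
      mul_zero, zero_mul, mul_one, one_mul, add_zero, zero_add, sub_zero, zero_sub]
    module
  have FI2 : FundIdent b₂ := by
    intro x1 x2 x3 x4 x5
    simp only [key2, key1]
    simp only [map_smul, Finsupp.smul_apply, Module.Basis.repr_self, Finsupp.single_apply,
      smul_eq_mul, Fin.isValue, Fin.reduceEq, if_true, if_false, ite_true, ite_false,
      mul_zero, zero_mul, mul_one, one_mul, add_zero, zero_add, sub_zero, zero_sub]
    module
  have hcompat : Compat b₁ b₂ := by
    intro x1 x2 x3 x4 x5
    simp only [key1, key2]
    simp only [map_smul, Finsupp.smul_apply, Module.Basis.repr_self, Finsupp.single_apply,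
      smul_eq_mul, Fin.isValue, Fin.reduceEq, if_true, if_false, ite_true, ite_false,
      mul_zero, zero_mul, mul_one, one_mul, add_zero, zero_add, sub_zero, zero_sub]
    module
  exact ⟨⟨ht₁, hs₁, FI1⟩, ⟨ht₂, hs₂, FI2⟩, hcompat⟩
end

section
/- Let N be a Nijenhuis operator on a 3-Lie algebra (g,[·,·,·]). Then the deformed bracket [x,y,z]_N := [Nx,Ny,z] + [x,Ny,Nz] + [Nx,y,Nz] − N[Nx,y,z] − N[x,Ny,z] − N[x,y,Nz] + N²[x,y,z] defines a 3-Lie algebra structure on g, and N is a 3-Lie algebra homomorphism from (g,[·,·,·]_N) to (g,[·,·,·]), i.e., N([x,y,z]_N) = [Nx,Ny,Nz] for all x,y,z. -/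
open Polynomial in
lemma aux_poly_vanish {K G : Type*} [Field K] [CharZero K] [AddCommGroup G] [Module K G]
    (v0 v1 v2 v3 v4 v5 : G)
    (h : ∀ t : K, v0 + t • v1 + t^2 • v2 + t^3 • v3 + t^4 • v4 + t^5 • v5 = 0) :
    v0 = 0 ∧ v1 = 0 ∧ v2 = 0 ∧ v3 = 0 ∧ v4 = 0 ∧ v5 = 0 := by
  have key : ∀ (φ : Module.Dual K G),
      (C (φ v0) + C (φ v1) * X + C (φ v2) * X^2 + C (φ v3) * X^3 + C (φ v4) * X^4
        + C (φ v5) * X^5 : K[X]) = 0 := by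
    intro φ
    apply Polynomial.funext
    intro t
    have ht := congrArg φ (h t)
    simp only [map_add, map_smul, map_zero, smul_eq_mul] at ht
    simp only [eval_add, eval_mul, eval_pow, eval_C, eval_X, eval_zero]
    linear_combination ht
  have coeffs : ∀ (φ : Module.Dual K G) (k : ℕ),
      Polynomial.coeff (C (φ v0) + C (φ v1) * X + C (φ v2) * X^2 + C (φ v3) * X^3
        + C (φ v4) * X^4 + C (φ v5) * X^5 : K[X]) k = 0 := by
    intro φ k; rw [key φ]; simp
  refine ⟨?_, ?_, ?_, ?_, ?_, ?_⟩ <;>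
    rw [← Module.forall_dual_apply_eq_zero_iff K] <;> intro φ
  · have := coeffs φ 0
    simpa [coeff_add, coeff_C_mul, coeff_X_pow, coeff_C, ← Polynomial.C_mul_X_pow_eq_monomial] using this
  · simpa using coeffs φ 1
  · simpa using coeffs φ 2
  · simpa using coeffs φ 3
  · simpa using coeffs φ 4
  · simpa using coeffs φ 5

def nijB {K G : Type*} [Field K] [AddCommGroup G] [Module K G]
    (b : G → G → G → G) (N : G →ₗ[K] G) (t : K) (x y z : G) : G :=
  b x y z + t • (b (N x) y z + b x (N y) z + b x y (N z) - N (b x y z))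
    + t^2 • deformedBracket b N x y z

set_option maxHeartbeats 4000000 in
theorem stmt3 {K G : Type*} [Field K] [CharZero K] [AddCommGroup G] [Module K G]
    (b : G → G → G → G) (h : Is3Lie K b) (N : G →ₗ[K] G) (hN : IsNijenhuis b N) :
    Is3Lie K (deformedBracket b N) ∧
    ∀ x y z, N (deformedBracket b N x y z) = b (N x) (N y) (N z) := by
  obtain ⟨⟨hl1, hl2, hl3⟩, ⟨hs1, hs2⟩, hFI⟩ := h
  have ba1 : ∀ u v y z, b (u+v) y z = b u y z + b v y z := fun u v y z => (hl1 y z).map_add u v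
  have bq1 : ∀ u v y z, b (u-v) y z = b u y z - b v y z := fun u v y z => (hl1 y z).map_sub u v
  have bn1 : ∀ u y z, b (-u) y z = - b u y z := fun u y z => (hl1 y z).map_neg u
  have bm1 : ∀ (k:K) u y z, b (k • u) y z = k • b u y z := fun k u y z => (hl1 y z).map_smul k u
  have ba2 : ∀ x u v z, b x (u+v) z = b x u z + b x v z := fun x u v z => (hl2 x z).map_add u v
  have bq2 : ∀ x u v z, b x (u-v) z = b x u z - b x v z := fun x u v z => (hl2 x z).map_sub u v
  have bn2 : ∀ x u z, b x (-u) z = - b x u z := fun x u z => (hl2 x z).map_neg u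
  have bm2 : ∀ (k:K) x u z, b x (k • u) z = k • b x u z := fun k x u z => (hl2 x z).map_smul k u
  have ba3 : ∀ x y u v, b x y (u+v) = b x y u + b x y v := fun x y u v => (hl3 x y).map_add u v
  have bq3 : ∀ x y u v, b x y (u-v) = b x y u - b x y v := fun x y u v => (hl3 x y).map_sub u v
  have bn3 : ∀ x y u, b x y (-u) = - b x y u := fun x y u => (hl3 x y).map_neg u
  have bm3 : ∀ (k:K) x y u, b x y (k • u) = k • b x y u := fun k x y u => (hl3 x y).map_smul k u
  refine ⟨⟨⟨?_, ?_, ?_⟩, ⟨?_, ?_⟩, ?_⟩, fun x y z => (hN x y z).symm⟩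
  · intro y z
    constructor
    · intro u v
      simp only [deformedBracket, map_add, ba1, ba2, ba3, bq1, bq2, bq3]
      abel
    · intro k u
      simp only [deformedBracket, map_smul, bm1, bm2, bm3, smul_add, smul_sub]
  · intro x z
    constructor
    · intro u v
      simp only [deformedBracket, map_add, ba1, ba2, ba3, bq1, bq2, bq3]
      abel
    · intro k u
      simp only [deformedBracket, map_smul, bm1, bm2, bm3, smul_add, smul_sub]
  · intro x y
    constructor
    · intro u v
      simp only [deformedBracket, map_add, ba1, ba2, ba3, bq1, bq2, bq3]
      abel
    · intro k u
      simp only [deformedBracket, map_smul, bm1, bm2, bm3, smul_add, smul_sub]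
  · intro x y z
    simp only [deformedBracket]
    rw [hs1 (N y) (N x) z, hs1 y (N x) (N z), hs1 (N y) x (N z),
      hs1 (N y) x z, hs1 y (N x) z, hs1 y x (N z), hs1 y x z]
    simp only [map_neg]
    abel
  · intro x y z
    simp only [deformedBracket]
    rw [hs2 (N x) (N z) y, hs2 x (N z) (N y), hs2 (N x) z (N y),
      hs2 (N x) z y, hs2 x (N z) y, hs2 x z (N y), hs2 x z y]
    simp only [map_neg]
    abel
  · intro x1 x2 x3 x4 x5
    have key : ∀ (t : K) (x y z : G), nijB b N t x y z + t • N (nijB b N t x y z)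
        = b (x + t • N x) (y + t • N y) (z + t • N z) := by
      intro t x y z
      have hn := hN x y z
      simp only [map_add, map_sub] at hn
      simp only [nijB, deformedBracket, map_add, map_sub, map_smul, ba1, ba2, ba3, bm1, bm2, bm3,
        smul_add, smul_sub]
      linear_combination (norm := module) (-(t^3) : K) • hn
    have hP : ∀ t : K, (-b (b (x1) (x2) (x3)) (x4) (x5) + b (x1) (x2) (b (x3) (x4) (x5)) - b (x3) (b (x1) (x2) (x4)) (x5) - b (x3) (x4) (b (x1) (x2) (x5))) + t • (b (N (x1)) (x2) (b (x3) (x4) (x5)) - b (N (x3)) (b (x1) (x2) (x4)) (x5) - b (N (x3)) (x4) (b (x1) (x2) (x5)) - b (b (N (x1)) (x2) (x3)) (x4) (x5) - b (b (x1) (N (x2)) (x3)) (x4) (x5) - b (b (x1) (x2) (N (x3))) (x4) (x5) - b (b (x1) (x2) (x3)) (N (x4)) (x5) - b (b (x1) (x2) (x3)) (x4) (N (x5)) + b (x1) (N (x2)) (b (x3) (x4) (x5)) + b (x1) (x2) (b (N (x3)) (x4) (x5)) + b (x1) (x2) (b (x3) (N (x4)) (x5)) + b (x1) (x2) (b (x3)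 (x4) (N (x5))) - b (x3) (N (x4)) (b (x1) (x2) (x5)) - b (x3) (b (N (x1)) (x2) (x4)) (x5) - b (x3) (b (x1) (N (x2)) (x4)) (x5) - b (x3) (b (x1) (x2) (N (x4))) (x5) - b (x3) (b (x1) (x2) (x4)) (N (x5)) - b (x3) (x4) (b (N (x1)) (x2) (x5)) - b (x3) (x4) (b (x1) (N (x2)) (x5)) - b (x3) (x4) (b (x1) (x2) (N (x5)))) + t^2 • (b (N (x1)) (N (x2)) (b (x3) (x4) (x5)) + b (N (x1)) (x2) (b (N (x3)) (x4) (x5)) + b (N (x1)) (x2) (b (x3) (N (x4)) (x5)) + b (N (x1)) (x2) (b (x3) (x4) (N (x5))) - b (N (x3)) (N (x4)) (b (x1) (x2) (x5)) - b (N (x3)) (b (N (x1)) (x2) (x4)) (x5) - b (N (x3)) (b (x1) (N (x2)) (x4)) (x5) - b (N (x3)) (b (x1) (x2) (N (x4))) (x5) - b (N (x3)) (b (x1) (x2) (x4)) (N (x5)) - b (N (x3)) (x4) (b (N (x1)) (x2) (x5)) - b (N (x3)) (x4) (b (x1) (N (x2)) (x5)) - b (N (x3)) (x4) (b (x1) (x2)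 (N (x5))) - b (b (N (x1)) (N (x2)) (x3)) (x4) (x5) - b (b (N (x1)) (x2) (N (x3))) (x4) (x5) - b (b (N (x1)) (x2) (x3)) (N (x4)) (x5) - b (b (N (x1)) (x2) (x3)) (x4) (N (x5)) - b (b (x1) (N (x2)) (N (x3))) (x4) (x5) - b (b (x1) (N (x2)) (x3)) (N (x4)) (x5) - b (b (x1) (N (x2)) (x3)) (x4) (N (x5)) - b (b (x1) (x2) (N (x3))) (N (x4)) (x5) - b (b (x1) (x2) (N (x3))) (x4) (N (x5)) - b (b (x1) (x2) (x3)) (N (x4)) (N (x5)) + b (x1) (N (x2)) (b (N (x3)) (x4) (x5)) + b (x1) (N (x2)) (b (x3) (N (x4)) (x5)) + b (x1) (N (x2)) (b (x3) (x4) (N (x5))) + b (x1) (x2) (b (N (x3)) (N (x4)) (x5)) + b (x1) (x2) (b (N (x3)) (x4) (N (x5))) + b (x1) (x2) (b (x3) (N (x4)) (N (x5))) - b (x3) (N (x4)) (b (N (x1)) (x2) (x5)) - b (x3) (N (x4)) (b (x1) (N (x2)) (x5)) - b (x3) (N (x4)) (b (x1) (x2) (N (x5))) - b (x3) (b (N (x1))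 (N (x2)) (x4)) (x5) - b (x3) (b (N (x1)) (x2) (N (x4))) (x5) - b (x3) (b (N (x1)) (x2) (x4)) (N (x5)) - b (x3) (b (x1) (N (x2)) (N (x4))) (x5) - b (x3) (b (x1) (N (x2)) (x4)) (N (x5)) - b (x3) (b (x1) (x2) (N (x4))) (N (x5)) - b (x3) (x4) (b (N (x1)) (N (x2)) (x5)) - b (x3) (x4) (b (N (x1)) (x2) (N (x5))) - b (x3) (x4) (b (x1) (N (x2)) (N (x5)))) + t^3 • (-N (N (N (b (b (x1) (x2) (x3)) (x4) (x5)))) + N (N (N (b (x1) (x2) (b (x3) (x4) (x5))))) - N (N (N (b (x3) (b (x1) (x2) (x4)) (x5)))) - N (N (N (b (x3) (x4) (b (x1) (x2) (x5))))) + N (N (b (N (b (x1) (x2) (x3))) (x4) (x5))) - N (N (b (N (x1)) (x2) (b (x3) (x4) (x5)))) + N (N (b (N (x3)) (b (x1) (x2) (x4)) (x5))) + N (N (b (N (x3)) (x4) (b (x1) (x2) (x5)))) + N (N (b (b (x1) (x2) (x3)) (N (x4)) (x5))) + N (N (b (b (x1) (x2) (x3)) (x4) (N (x5)))) - N (N (b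 (x1) (N (x2)) (b (x3) (x4) (x5)))) - N (N (b (x1) (x2) (N (b (x3) (x4) (x5))))) + N (N (b (x3) (N (b (x1) (x2) (x4))) (x5))) + N (N (b (x3) (N (x4)) (b (x1) (x2) (x5)))) + N (N (b (x3) (b (x1) (x2) (x4)) (N (x5)))) + N (N (b (x3) (x4) (N (b (x1) (x2) (x5))))) - N (b (N (b (x1) (x2) (x3))) (N (x4)) (x5)) - N (b (N (b (x1) (x2) (x3))) (x4) (N (x5))) + N (b (N (x1)) (N (x2)) (b (x3) (x4) (x5))) + N (b (N (x1)) (x2) (N (b (x3) (x4) (x5)))) - N (b (N (x3)) (N (b (x1) (x2) (x4))) (x5)) - N (b (N (x3)) (N (x4)) (b (x1) (x2) (x5))) - N (b (N (x3)) (b (x1) (x2) (x4)) (N (x5))) - N (b (N (x3)) (x4) (N (b (x1) (x2) (x5)))) - N (b (b (x1) (x2) (x3)) (N (x4)) (N (x5))) + N (b (x1) (N (x2)) (N (b (x3) (x4) (x5)))) - N (b (x3) (N (b (x1) (x2) (x4))) (N (x5))) - N (b (x3) (N (x4)) (N (b (x1) (x2) (x5)))) - b (N (N (N (b (x1) (x2)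 (x3))))) (x4) (x5) + b (N (N (b (N (x1)) (x2) (x3)))) (x4) (x5) + b (N (N (b (x1) (N (x2)) (x3)))) (x4) (x5) + b (N (N (b (x1) (x2) (N (x3))))) (x4) (x5) - b (N (b (N (x1)) (N (x2)) (x3))) (x4) (x5) - b (N (b (N (x1)) (x2) (N (x3)))) (x4) (x5) - b (N (b (x1) (N (x2)) (N (x3)))) (x4) (x5) + b (N (b (x1) (x2) (x3))) (N (x4)) (N (x5)) - b (N (x1)) (N (x2)) (N (b (x3) (x4) (x5))) + b (N (x1)) (N (x2)) (b (N (x3)) (x4) (x5)) + b (N (x1)) (N (x2)) (b (x3) (N (x4)) (x5)) + b (N (x1)) (N (x2)) (b (x3) (x4) (N (x5))) + b (N (x1)) (x2) (b (N (x3)) (N (x4)) (x5)) + b (N (x1)) (x2) (b (N (x3)) (x4) (N (x5))) + b (N (x1)) (x2) (b (x3) (N (x4)) (N (x5))) + b (N (x3)) (N (b (x1) (x2) (x4))) (N (x5)) + b (N (x3)) (N (x4)) (N (b (x1) (x2) (x5))) - b (N (x3)) (N (x4)) (b (N (x1)) (x2) (x5)) - b (N (x3)) (N (x4)) (b (x1)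 (N (x2)) (x5)) - b (N (x3)) (N (x4)) (b (x1) (x2) (N (x5))) - b (N (x3)) (b (N (x1)) (N (x2)) (x4)) (x5) - b (N (x3)) (b (N (x1)) (x2) (N (x4))) (x5) - b (N (x3)) (b (N (x1)) (x2) (x4)) (N (x5)) - b (N (x3)) (b (x1) (N (x2)) (N (x4))) (x5) - b (N (x3)) (b (x1) (N (x2)) (x4)) (N (x5)) - b (N (x3)) (b (x1) (x2) (N (x4))) (N (x5)) - b (N (x3)) (x4) (b (N (x1)) (N (x2)) (x5)) - b (N (x3)) (x4) (b (N (x1)) (x2) (N (x5))) - b (N (x3)) (x4) (b (x1) (N (x2)) (N (x5))) - b (b (N (x1)) (N (x2)) (x3)) (N (x4)) (x5) - b (b (N (x1)) (N (x2)) (x3)) (x4) (N (x5)) - b (b (N (x1)) (x2) (N (x3))) (N (x4)) (x5) - b (b (N (x1)) (x2) (N (x3))) (x4) (N (x5)) - b (b (N (x1)) (x2) (x3)) (N (x4)) (N (x5)) - b (b (x1) (N (x2)) (N (x3))) (N (x4)) (x5) - b (b (x1) (N (x2)) (N (x3))) (x4) (N (x5)) - b (b (x1) (N (x2)) (x3))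 (N (x4)) (N (x5)) - b (b (x1) (x2) (N (x3))) (N (x4)) (N (x5)) + b (x1) (N (x2)) (b (N (x3)) (N (x4)) (x5)) + b (x1) (N (x2)) (b (N (x3)) (x4) (N (x5))) + b (x1) (N (x2)) (b (x3) (N (x4)) (N (x5))) + b (x1) (x2) (N (N (N (b (x3) (x4) (x5))))) - b (x1) (x2) (N (N (b (N (x3)) (x4) (x5)))) - b (x1) (x2) (N (N (b (x3) (N (x4)) (x5)))) - b (x1) (x2) (N (N (b (x3) (x4) (N (x5))))) + b (x1) (x2) (N (b (N (x3)) (N (x4)) (x5))) + b (x1) (x2) (N (b (N (x3)) (x4) (N (x5)))) + b (x1) (x2) (N (b (x3) (N (x4)) (N (x5)))) - b (x3) (N (N (N (b (x1) (x2) (x4))))) (x5) + b (x3) (N (N (b (N (x1)) (x2) (x4)))) (x5) + b (x3) (N (N (b (x1) (N (x2)) (x4)))) (x5) + b (x3) (N (N (b (x1) (x2) (N (x4))))) (x5) - b (x3) (N (b (N (x1)) (N (x2)) (x4))) (x5) - b (x3) (N (b (N (x1)) (x2) (N (x4)))) (x5) - b (x3) (N (b (x1) (N (x2)) (N (x4))))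 (x5) - b (x3) (N (x4)) (b (N (x1)) (N (x2)) (x5)) - b (x3) (N (x4)) (b (N (x1)) (x2) (N (x5))) - b (x3) (N (x4)) (b (x1) (N (x2)) (N (x5))) - b (x3) (b (N (x1)) (N (x2)) (x4)) (N (x5)) - b (x3) (b (N (x1)) (x2) (N (x4))) (N (x5)) - b (x3) (b (x1) (N (x2)) (N (x4))) (N (x5)) - b (x3) (x4) (N (N (N (b (x1) (x2) (x5))))) + b (x3) (x4) (N (N (b (N (x1)) (x2) (x5)))) + b (x3) (x4) (N (N (b (x1) (N (x2)) (x5)))) + b (x3) (x4) (N (N (b (x1) (x2) (N (x5))))) - b (x3) (x4) (N (b (N (x1)) (N (x2)) (x5))) - b (x3) (x4) (N (b (N (x1)) (x2) (N (x5)))) - b (x3) (x4) (N (b (x1) (N (x2)) (N (x5)))))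
        + t^4 • (N (N (N (b (N (b (x1) (x2) (x3))) (x4) (x5)))) - N (N (N (b (b (N (x1)) (x2) (x3)) (x4) (x5)))) - N (N (N (b (b (x1) (N (x2)) (x3)) (x4) (x5)))) - N (N (N (b (b (x1) (x2) (N (x3))) (x4) (x5)))) - N (N (N (b (x1) (x2) (N (b (x3) (x4) (x5)))))) + N (N (N (b (x1) (x2) (b (N (x3)) (x4) (x5))))) + N (N (N (b (x1) (x2) (b (x3) (N (x4)) (x5))))) + N (N (N (b (x1) (x2) (b (x3) (x4) (N (x5)))))) + N (N (N (b (x3) (N (b (x1) (x2) (x4))) (x5)))) - N (N (N (b (x3) (b (N (x1)) (x2) (x4)) (x5)))) - N (N (N (b (x3) (b (x1) (N (x2)) (x4)) (x5)))) - N (N (N (b (x3) (b (x1) (x2) (N (x4))) (x5)))) + N (N (N (b (x3) (x4) (N (b (x1) (x2) (x5)))))) - N (N (N (b (x3) (x4) (b (N (x1)) (x2) (x5))))) - N (N (N (b (x3) (x4) (b (x1) (N (x2)) (x5))))) - N (N (N (b (x3) (x4) (b (x1) (x2) (N (x5)))))) - N (N (b (N (N (b (x1) (x2) (x3)))) (x4)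 (x5))) + N (N (b (N (b (N (x1)) (x2) (x3))) (x4) (x5))) + N (N (b (N (b (x1) (N (x2)) (x3))) (x4) (x5))) + N (N (b (N (b (x1) (x2) (N (x3)))) (x4) (x5))) - N (N (b (N (b (x1) (x2) (x3))) (N (x4)) (x5))) - N (N (b (N (b (x1) (x2) (x3))) (x4) (N (x5)))) + N (N (b (N (x1)) (x2) (N (b (x3) (x4) (x5))))) - N (N (b (N (x1)) (x2) (b (N (x3)) (x4) (x5)))) - N (N (b (N (x1)) (x2) (b (x3) (N (x4)) (x5)))) - N (N (b (N (x1)) (x2) (b (x3) (x4) (N (x5))))) - N (N (b (N (x3)) (N (b (x1) (x2) (x4))) (x5))) + N (N (b (N (x3)) (b (N (x1)) (x2) (x4)) (x5))) + N (N (b (N (x3)) (b (x1) (N (x2)) (x4)) (x5))) + N (N (b (N (x3)) (b (x1) (x2) (N (x4))) (x5))) - N (N (b (N (x3)) (x4) (N (b (x1) (x2) (x5))))) + N (N (b (N (x3)) (x4) (b (N (x1)) (x2) (x5)))) + N (N (b (N (x3)) (x4) (b (x1) (N (x2)) (x5)))) + N (N (b (N (x3)) (x4) (b (x1) (x2) (N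 (x5))))) + N (N (b (b (N (x1)) (x2) (x3)) (N (x4)) (x5))) + N (N (b (b (N (x1)) (x2) (x3)) (x4) (N (x5)))) + N (N (b (b (x1) (N (x2)) (x3)) (N (x4)) (x5))) + N (N (b (b (x1) (N (x2)) (x3)) (x4) (N (x5)))) + N (N (b (b (x1) (x2) (N (x3))) (N (x4)) (x5))) + N (N (b (b (x1) (x2) (N (x3))) (x4) (N (x5)))) + N (N (b (x1) (N (x2)) (N (b (x3) (x4) (x5))))) - N (N (b (x1) (N (x2)) (b (N (x3)) (x4) (x5)))) - N (N (b (x1) (N (x2)) (b (x3) (N (x4)) (x5)))) - N (N (b (x1) (N (x2)) (b (x3) (x4) (N (x5))))) + N (N (b (x1) (x2) (N (N (b (x3) (x4) (x5)))))) - N (N (b (x1) (x2) (N (b (N (x3)) (x4) (x5))))) - N (N (b (x1) (x2) (N (b (x3) (N (x4)) (x5))))) - N (N (b (x1) (x2) (N (b (x3) (x4) (N (x5)))))) - N (N (b (x3) (N (N (b (x1) (x2) (x4)))) (x5))) + N (N (b (x3) (N (b (N (x1)) (x2) (x4))) (x5))) + N (N (b (x3) (N (b (x1) (N (x2)) (x4)))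 (x5))) + N (N (b (x3) (N (b (x1) (x2) (N (x4)))) (x5))) - N (N (b (x3) (N (b (x1) (x2) (x4))) (N (x5)))) - N (N (b (x3) (N (x4)) (N (b (x1) (x2) (x5))))) + N (N (b (x3) (N (x4)) (b (N (x1)) (x2) (x5)))) + N (N (b (x3) (N (x4)) (b (x1) (N (x2)) (x5)))) + N (N (b (x3) (N (x4)) (b (x1) (x2) (N (x5))))) + N (N (b (x3) (b (N (x1)) (x2) (x4)) (N (x5)))) + N (N (b (x3) (b (x1) (N (x2)) (x4)) (N (x5)))) + N (N (b (x3) (b (x1) (x2) (N (x4))) (N (x5)))) - N (N (b (x3) (x4) (N (N (b (x1) (x2) (x5)))))) + N (N (b (x3) (x4) (N (b (N (x1)) (x2) (x5))))) + N (N (b (x3) (x4) (N (b (x1) (N (x2)) (x5))))) + N (N (b (x3) (x4) (N (b (x1) (x2) (N (x5)))))) + N (b (N (N (b (x1) (x2) (x3)))) (N (x4)) (x5)) + N (b (N (N (b (x1) (x2) (x3)))) (x4) (N (x5))) - N (b (N (b (N (x1)) (x2) (x3))) (N (x4)) (x5)) - N (b (N (b (N (x1)) (x2) (x3))) (x4)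 (N (x5))) - N (b (N (b (x1) (N (x2)) (x3))) (N (x4)) (x5)) - N (b (N (b (x1) (N (x2)) (x3))) (x4) (N (x5))) - N (b (N (b (x1) (x2) (N (x3)))) (N (x4)) (x5)) - N (b (N (b (x1) (x2) (N (x3)))) (x4) (N (x5))) + N (b (N (b (x1) (x2) (x3))) (N (x4)) (N (x5))) - N (b (N (x1)) (N (x2)) (N (b (x3) (x4) (x5)))) + N (b (N (x1)) (N (x2)) (b (N (x3)) (x4) (x5))) + N (b (N (x1)) (N (x2)) (b (x3) (N (x4)) (x5))) + N (b (N (x1)) (N (x2)) (b (x3) (x4) (N (x5)))) - N (b (N (x1)) (x2) (N (N (b (x3) (x4) (x5))))) + N (b (N (x1)) (x2) (N (b (N (x3)) (x4) (x5)))) + N (b (N (x1)) (x2) (N (b (x3) (N (x4)) (x5)))) + N (b (N (x1)) (x2) (N (b (x3) (x4) (N (x5))))) + N (b (N (x3)) (N (N (b (x1) (x2) (x4)))) (x5)) - N (b (N (x3)) (N (b (N (x1)) (x2) (x4))) (x5)) - N (b (N (x3)) (N (b (x1) (N (x2)) (x4))) (x5)) - N (b (N (x3)) (N (b (x1) (x2)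 (N (x4)))) (x5)) + N (b (N (x3)) (N (b (x1) (x2) (x4))) (N (x5))) + N (b (N (x3)) (N (x4)) (N (b (x1) (x2) (x5)))) - N (b (N (x3)) (N (x4)) (b (N (x1)) (x2) (x5))) - N (b (N (x3)) (N (x4)) (b (x1) (N (x2)) (x5))) - N (b (N (x3)) (N (x4)) (b (x1) (x2) (N (x5)))) - N (b (N (x3)) (b (N (x1)) (x2) (x4)) (N (x5))) - N (b (N (x3)) (b (x1) (N (x2)) (x4)) (N (x5))) - N (b (N (x3)) (b (x1) (x2) (N (x4))) (N (x5))) + N (b (N (x3)) (x4) (N (N (b (x1) (x2) (x5))))) - N (b (N (x3)) (x4) (N (b (N (x1)) (x2) (x5)))) - N (b (N (x3)) (x4) (N (b (x1) (N (x2)) (x5)))) - N (b (N (x3)) (x4) (N (b (x1) (x2) (N (x5))))) - N (b (b (N (x1)) (x2) (x3)) (N (x4)) (N (x5))) - N (b (b (x1) (N (x2)) (x3)) (N (x4)) (N (x5))) - N (b (b (x1) (x2) (N (x3))) (N (x4)) (N (x5))) - N (b (x1) (N (x2)) (N (N (b (x3) (x4) (x5))))) + N (b (x1) (N (x2)) (N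 (b (N (x3)) (x4) (x5)))) + N (b (x1) (N (x2)) (N (b (x3) (N (x4)) (x5)))) + N (b (x1) (N (x2)) (N (b (x3) (x4) (N (x5))))) + N (b (x3) (N (N (b (x1) (x2) (x4)))) (N (x5))) - N (b (x3) (N (b (N (x1)) (x2) (x4))) (N (x5))) - N (b (x3) (N (b (x1) (N (x2)) (x4))) (N (x5))) - N (b (x3) (N (b (x1) (x2) (N (x4)))) (N (x5))) + N (b (x3) (N (x4)) (N (N (b (x1) (x2) (x5))))) - N (b (x3) (N (x4)) (N (b (N (x1)) (x2) (x5)))) - N (b (x3) (N (x4)) (N (b (x1) (N (x2)) (x5)))) - N (b (x3) (N (x4)) (N (b (x1) (x2) (N (x5))))) - b (N (N (N (b (x1) (x2) (x3))))) (N (x4)) (x5) - b (N (N (N (b (x1) (x2) (x3))))) (x4) (N (x5)) + b (N (N (b (N (x1)) (x2) (x3)))) (N (x4)) (x5) + b (N (N (b (N (x1)) (x2) (x3)))) (x4) (N (x5)) + b (N (N (b (x1) (N (x2)) (x3)))) (N (x4)) (x5) + b (N (N (b (x1) (N (x2)) (x3)))) (x4) (N (x5)) + b (N (N (b (x1) (x2)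 (N (x3))))) (N (x4)) (x5) + b (N (N (b (x1) (x2) (N (x3))))) (x4) (N (x5)) - b (N (N (b (x1) (x2) (x3)))) (N (x4)) (N (x5)) - b (N (b (N (x1)) (N (x2)) (x3))) (N (x4)) (x5) - b (N (b (N (x1)) (N (x2)) (x3))) (x4) (N (x5)) - b (N (b (N (x1)) (x2) (N (x3)))) (N (x4)) (x5) - b (N (b (N (x1)) (x2) (N (x3)))) (x4) (N (x5)) + b (N (b (N (x1)) (x2) (x3))) (N (x4)) (N (x5)) - b (N (b (x1) (N (x2)) (N (x3)))) (N (x4)) (x5) - b (N (b (x1) (N (x2)) (N (x3)))) (x4) (N (x5)) + b (N (b (x1) (N (x2)) (x3))) (N (x4)) (N (x5)) + b (N (b (x1) (x2) (N (x3)))) (N (x4)) (N (x5)) + b (N (x1)) (N (x2)) (N (N (b (x3) (x4) (x5)))) - b (N (x1)) (N (x2)) (N (b (N (x3)) (x4) (x5))) - b (N (x1)) (N (x2)) (N (b (x3) (N (x4)) (x5))) - b (N (x1)) (N (x2)) (N (b (x3) (x4) (N (x5)))) + b (N (x1)) (N (x2)) (b (N (x3)) (N (x4)) (x5)) + b (N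 (x1)) (N (x2)) (b (N (x3)) (x4) (N (x5))) + b (N (x1)) (N (x2)) (b (x3) (N (x4)) (N (x5))) + b (N (x1)) (x2) (N (N (N (b (x3) (x4) (x5))))) - b (N (x1)) (x2) (N (N (b (N (x3)) (x4) (x5)))) - b (N (x1)) (x2) (N (N (b (x3) (N (x4)) (x5)))) - b (N (x1)) (x2) (N (N (b (x3) (x4) (N (x5))))) + b (N (x1)) (x2) (N (b (N (x3)) (N (x4)) (x5))) + b (N (x1)) (x2) (N (b (N (x3)) (x4) (N (x5)))) + b (N (x1)) (x2) (N (b (x3) (N (x4)) (N (x5)))) - b (N (x3)) (N (N (N (b (x1) (x2) (x4))))) (x5) + b (N (x3)) (N (N (b (N (x1)) (x2) (x4)))) (x5) + b (N (x3)) (N (N (b (x1) (N (x2)) (x4)))) (x5) + b (N (x3)) (N (N (b (x1) (x2) (N (x4))))) (x5) - b (N (x3)) (N (N (b (x1) (x2) (x4)))) (N (x5)) - b (N (x3)) (N (b (N (x1)) (N (x2)) (x4))) (x5) - b (N (x3)) (N (b (N (x1)) (x2) (N (x4)))) (x5) + b (N (x3)) (N (b (N (x1)) (x2) (x4))) (N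 (x5)) - b (N (x3)) (N (b (x1) (N (x2)) (N (x4)))) (x5) + b (N (x3)) (N (b (x1) (N (x2)) (x4))) (N (x5)) + b (N (x3)) (N (b (x1) (x2) (N (x4)))) (N (x5)) - b (N (x3)) (N (x4)) (N (N (b (x1) (x2) (x5)))) + b (N (x3)) (N (x4)) (N (b (N (x1)) (x2) (x5))) + b (N (x3)) (N (x4)) (N (b (x1) (N (x2)) (x5))) + b (N (x3)) (N (x4)) (N (b (x1) (x2) (N (x5)))) - b (N (x3)) (N (x4)) (b (N (x1)) (N (x2)) (x5)) - b (N (x3)) (N (x4)) (b (N (x1)) (x2) (N (x5))) - b (N (x3)) (N (x4)) (b (x1) (N (x2)) (N (x5))) - b (N (x3)) (b (N (x1)) (N (x2)) (x4)) (N (x5)) - b (N (x3)) (b (N (x1)) (x2) (N (x4))) (N (x5)) - b (N (x3)) (b (x1) (N (x2)) (N (x4))) (N (x5)) - b (N (x3)) (x4) (N (N (N (b (x1) (x2) (x5))))) + b (N (x3)) (x4) (N (N (b (N (x1)) (x2) (x5)))) + b (N (x3)) (x4) (N (N (b (x1) (N (x2)) (x5)))) + b (N (x3)) (x4) (N (N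 (b (x1) (x2) (N (x5))))) - b (N (x3)) (x4) (N (b (N (x1)) (N (x2)) (x5))) - b (N (x3)) (x4) (N (b (N (x1)) (x2) (N (x5)))) - b (N (x3)) (x4) (N (b (x1) (N (x2)) (N (x5)))) - b (b (N (x1)) (N (x2)) (x3)) (N (x4)) (N (x5)) - b (b (N (x1)) (x2) (N (x3))) (N (x4)) (N (x5)) - b (b (x1) (N (x2)) (N (x3))) (N (x4)) (N (x5)) + b (x1) (N (x2)) (N (N (N (b (x3) (x4) (x5))))) - b (x1) (N (x2)) (N (N (b (N (x3)) (x4) (x5)))) - b (x1) (N (x2)) (N (N (b (x3) (N (x4)) (x5)))) - b (x1) (N (x2)) (N (N (b (x3) (x4) (N (x5))))) + b (x1) (N (x2)) (N (b (N (x3)) (N (x4)) (x5))) + b (x1) (N (x2)) (N (b (N (x3)) (x4) (N (x5)))) + b (x1) (N (x2)) (N (b (x3) (N (x4)) (N (x5)))) - b (x3) (N (N (N (b (x1) (x2) (x4))))) (N (x5)) + b (x3) (N (N (b (N (x1)) (x2) (x4)))) (N (x5)) + b (x3) (N (N (b (x1) (N (x2)) (x4)))) (N (x5)) + b (x3) (N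 (N (b (x1) (x2) (N (x4))))) (N (x5)) - b (x3) (N (b (N (x1)) (N (x2)) (x4))) (N (x5)) - b (x3) (N (b (N (x1)) (x2) (N (x4)))) (N (x5)) - b (x3) (N (b (x1) (N (x2)) (N (x4)))) (N (x5)) - b (x3) (N (x4)) (N (N (N (b (x1) (x2) (x5))))) + b (x3) (N (x4)) (N (N (b (N (x1)) (x2) (x5)))) + b (x3) (N (x4)) (N (N (b (x1) (N (x2)) (x5)))) + b (x3) (N (x4)) (N (N (b (x1) (x2) (N (x5))))) - b (x3) (N (x4)) (N (b (N (x1)) (N (x2)) (x5))) - b (x3) (N (x4)) (N (b (N (x1)) (x2) (N (x5)))) - b (x3) (N (x4)) (N (b (x1) (N (x2)) (N (x5))))) + t^5 • (-N (N (N (b (N (N (b (x1) (x2) (x3)))) (x4) (x5)))) + N (N (N (b (N (b (N (x1)) (x2) (x3))) (x4) (x5)))) + N (N (N (b (N (b (x1) (N (x2)) (x3))) (x4) (x5)))) + N (N (N (b (N (b (x1) (x2) (N (x3)))) (x4) (x5)))) - N (N (N (b (b (N (x1)) (N (x2)) (x3)) (x4) (x5)))) - N (N (N (b (b (N (x1))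 (x2) (N (x3))) (x4) (x5)))) - N (N (N (b (b (x1) (N (x2)) (N (x3))) (x4) (x5)))) + N (N (N (b (x1) (x2) (N (N (b (x3) (x4) (x5))))))) - N (N (N (b (x1) (x2) (N (b (N (x3)) (x4) (x5)))))) - N (N (N (b (x1) (x2) (N (b (x3) (N (x4)) (x5)))))) - N (N (N (b (x1) (x2) (N (b (x3) (x4) (N (x5))))))) + N (N (N (b (x1) (x2) (b (N (x3)) (N (x4)) (x5))))) + N (N (N (b (x1) (x2) (b (N (x3)) (x4) (N (x5)))))) + N (N (N (b (x1) (x2) (b (x3) (N (x4)) (N (x5)))))) - N (N (N (b (x3) (N (N (b (x1) (x2) (x4)))) (x5)))) + N (N (N (b (x3) (N (b (N (x1)) (x2) (x4))) (x5)))) + N (N (N (b (x3) (N (b (x1) (N (x2)) (x4))) (x5)))) + N (N (N (b (x3) (N (b (x1) (x2) (N (x4)))) (x5)))) - N (N (N (b (x3) (b (N (x1)) (N (x2)) (x4)) (x5)))) - N (N (N (b (x3) (b (N (x1)) (x2) (N (x4))) (x5)))) - N (N (N (b (x3) (b (x1) (N (x2)) (N (x4))) (x5)))) - N (N (N (b (x3)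 (x4) (N (N (b (x1) (x2) (x5))))))) + N (N (N (b (x3) (x4) (N (b (N (x1)) (x2) (x5)))))) + N (N (N (b (x3) (x4) (N (b (x1) (N (x2)) (x5)))))) + N (N (N (b (x3) (x4) (N (b (x1) (x2) (N (x5))))))) - N (N (N (b (x3) (x4) (b (N (x1)) (N (x2)) (x5))))) - N (N (N (b (x3) (x4) (b (N (x1)) (x2) (N (x5)))))) - N (N (N (b (x3) (x4) (b (x1) (N (x2)) (N (x5)))))) + N (N (b (N (N (N (b (x1) (x2) (x3))))) (x4) (x5))) - N (N (b (N (N (b (N (x1)) (x2) (x3)))) (x4) (x5))) - N (N (b (N (N (b (x1) (N (x2)) (x3)))) (x4) (x5))) - N (N (b (N (N (b (x1) (x2) (N (x3))))) (x4) (x5))) + N (N (b (N (N (b (x1) (x2) (x3)))) (N (x4)) (x5))) + N (N (b (N (N (b (x1) (x2) (x3)))) (x4) (N (x5)))) + N (N (b (N (b (N (x1)) (N (x2)) (x3))) (x4) (x5))) + N (N (b (N (b (N (x1)) (x2) (N (x3)))) (x4) (x5))) - N (N (b (N (b (N (x1)) (x2) (x3))) (N (x4)) (x5))) - N (N (b (N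 (b (N (x1)) (x2) (x3))) (x4) (N (x5)))) + N (N (b (N (b (x1) (N (x2)) (N (x3)))) (x4) (x5))) - N (N (b (N (b (x1) (N (x2)) (x3))) (N (x4)) (x5))) - N (N (b (N (b (x1) (N (x2)) (x3))) (x4) (N (x5)))) - N (N (b (N (b (x1) (x2) (N (x3)))) (N (x4)) (x5))) - N (N (b (N (b (x1) (x2) (N (x3)))) (x4) (N (x5)))) - N (N (b (N (x1)) (x2) (N (N (b (x3) (x4) (x5)))))) + N (N (b (N (x1)) (x2) (N (b (N (x3)) (x4) (x5))))) + N (N (b (N (x1)) (x2) (N (b (x3) (N (x4)) (x5))))) + N (N (b (N (x1)) (x2) (N (b (x3) (x4) (N (x5)))))) - N (N (b (N (x1)) (x2) (b (N (x3)) (N (x4)) (x5)))) - N (N (b (N (x1)) (x2) (b (N (x3)) (x4) (N (x5))))) - N (N (b (N (x1)) (x2) (b (x3) (N (x4)) (N (x5))))) + N (N (b (N (x3)) (N (N (b (x1) (x2) (x4)))) (x5))) - N (N (b (N (x3)) (N (b (N (x1)) (x2) (x4))) (x5))) - N (N (b (N (x3)) (N (b (x1) (N (x2)) (x4))) (x5)))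 - N (N (b (N (x3)) (N (b (x1) (x2) (N (x4)))) (x5))) + N (N (b (N (x3)) (b (N (x1)) (N (x2)) (x4)) (x5))) + N (N (b (N (x3)) (b (N (x1)) (x2) (N (x4))) (x5))) + N (N (b (N (x3)) (b (x1) (N (x2)) (N (x4))) (x5))) + N (N (b (N (x3)) (x4) (N (N (b (x1) (x2) (x5)))))) - N (N (b (N (x3)) (x4) (N (b (N (x1)) (x2) (x5))))) - N (N (b (N (x3)) (x4) (N (b (x1) (N (x2)) (x5))))) - N (N (b (N (x3)) (x4) (N (b (x1) (x2) (N (x5)))))) + N (N (b (N (x3)) (x4) (b (N (x1)) (N (x2)) (x5)))) + N (N (b (N (x3)) (x4) (b (N (x1)) (x2) (N (x5))))) + N (N (b (N (x3)) (x4) (b (x1) (N (x2)) (N (x5))))) + N (N (b (b (N (x1)) (N (x2)) (x3)) (N (x4)) (x5))) + N (N (b (b (N (x1)) (N (x2)) (x3)) (x4) (N (x5)))) + N (N (b (b (N (x1)) (x2) (N (x3))) (N (x4)) (x5))) + N (N (b (b (N (x1)) (x2) (N (x3))) (x4) (N (x5)))) + N (N (b (b (x1) (N (x2)) (N (x3)))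 (N (x4)) (x5))) + N (N (b (b (x1) (N (x2)) (N (x3))) (x4) (N (x5)))) - N (N (b (x1) (N (x2)) (N (N (b (x3) (x4) (x5)))))) + N (N (b (x1) (N (x2)) (N (b (N (x3)) (x4) (x5))))) + N (N (b (x1) (N (x2)) (N (b (x3) (N (x4)) (x5))))) + N (N (b (x1) (N (x2)) (N (b (x3) (x4) (N (x5)))))) - N (N (b (x1) (N (x2)) (b (N (x3)) (N (x4)) (x5)))) - N (N (b (x1) (N (x2)) (b (N (x3)) (x4) (N (x5))))) - N (N (b (x1) (N (x2)) (b (x3) (N (x4)) (N (x5))))) - N (N (b (x1) (x2) (N (N (N (b (x3) (x4) (x5))))))) + N (N (b (x1) (x2) (N (N (b (N (x3)) (x4) (x5)))))) + N (N (b (x1) (x2) (N (N (b (x3) (N (x4)) (x5)))))) + N (N (b (x1) (x2) (N (N (b (x3) (x4) (N (x5))))))) - N (N (b (x1) (x2) (N (b (N (x3)) (N (x4)) (x5))))) - N (N (b (x1) (x2) (N (b (N (x3)) (x4) (N (x5)))))) - N (N (b (x1) (x2) (N (b (x3) (N (x4)) (N (x5)))))) + N (N (b (x3) (N (N (N (b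 (x1) (x2) (x4))))) (x5))) - N (N (b (x3) (N (N (b (N (x1)) (x2) (x4)))) (x5))) - N (N (b (x3) (N (N (b (x1) (N (x2)) (x4)))) (x5))) - N (N (b (x3) (N (N (b (x1) (x2) (N (x4))))) (x5))) + N (N (b (x3) (N (N (b (x1) (x2) (x4)))) (N (x5)))) + N (N (b (x3) (N (b (N (x1)) (N (x2)) (x4))) (x5))) + N (N (b (x3) (N (b (N (x1)) (x2) (N (x4)))) (x5))) - N (N (b (x3) (N (b (N (x1)) (x2) (x4))) (N (x5)))) + N (N (b (x3) (N (b (x1) (N (x2)) (N (x4)))) (x5))) - N (N (b (x3) (N (b (x1) (N (x2)) (x4))) (N (x5)))) - N (N (b (x3) (N (b (x1) (x2) (N (x4)))) (N (x5)))) + N (N (b (x3) (N (x4)) (N (N (b (x1) (x2) (x5)))))) - N (N (b (x3) (N (x4)) (N (b (N (x1)) (x2) (x5))))) - N (N (b (x3) (N (x4)) (N (b (x1) (N (x2)) (x5))))) - N (N (b (x3) (N (x4)) (N (b (x1) (x2) (N (x5)))))) + N (N (b (x3) (N (x4)) (b (N (x1)) (N (x2)) (x5)))) + N (N (b (x3)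 (N (x4)) (b (N (x1)) (x2) (N (x5))))) + N (N (b (x3) (N (x4)) (b (x1) (N (x2)) (N (x5))))) + N (N (b (x3) (b (N (x1)) (N (x2)) (x4)) (N (x5)))) + N (N (b (x3) (b (N (x1)) (x2) (N (x4))) (N (x5)))) + N (N (b (x3) (b (x1) (N (x2)) (N (x4))) (N (x5)))) + N (N (b (x3) (x4) (N (N (N (b (x1) (x2) (x5))))))) - N (N (b (x3) (x4) (N (N (b (N (x1)) (x2) (x5)))))) - N (N (b (x3) (x4) (N (N (b (x1) (N (x2)) (x5)))))) - N (N (b (x3) (x4) (N (N (b (x1) (x2) (N (x5))))))) + N (N (b (x3) (x4) (N (b (N (x1)) (N (x2)) (x5))))) + N (N (b (x3) (x4) (N (b (N (x1)) (x2) (N (x5)))))) + N (N (b (x3) (x4) (N (b (x1) (N (x2)) (N (x5)))))) - N (b (N (N (N (b (x1) (x2) (x3))))) (N (x4)) (x5)) - N (b (N (N (N (b (x1) (x2) (x3))))) (x4) (N (x5))) + N (b (N (N (b (N (x1)) (x2) (x3)))) (N (x4)) (x5)) + N (b (N (N (b (N (x1)) (x2) (x3)))) (x4) (N (x5))) + N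 (b (N (N (b (x1) (N (x2)) (x3)))) (N (x4)) (x5)) + N (b (N (N (b (x1) (N (x2)) (x3)))) (x4) (N (x5))) + N (b (N (N (b (x1) (x2) (N (x3))))) (N (x4)) (x5)) + N (b (N (N (b (x1) (x2) (N (x3))))) (x4) (N (x5))) - N (b (N (N (b (x1) (x2) (x3)))) (N (x4)) (N (x5))) - N (b (N (b (N (x1)) (N (x2)) (x3))) (N (x4)) (x5)) - N (b (N (b (N (x1)) (N (x2)) (x3))) (x4) (N (x5))) - N (b (N (b (N (x1)) (x2) (N (x3)))) (N (x4)) (x5)) - N (b (N (b (N (x1)) (x2) (N (x3)))) (x4) (N (x5))) + N (b (N (b (N (x1)) (x2) (x3))) (N (x4)) (N (x5))) - N (b (N (b (x1) (N (x2)) (N (x3)))) (N (x4)) (x5)) - N (b (N (b (x1) (N (x2)) (N (x3)))) (x4) (N (x5))) + N (b (N (b (x1) (N (x2)) (x3))) (N (x4)) (N (x5))) + N (b (N (b (x1) (x2) (N (x3)))) (N (x4)) (N (x5))) + N (b (N (x1)) (N (x2)) (N (N (b (x3) (x4) (x5))))) - N (b (N (x1)) (N (x2)) (N (b (N (x3))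 (x4) (x5)))) - N (b (N (x1)) (N (x2)) (N (b (x3) (N (x4)) (x5)))) - N (b (N (x1)) (N (x2)) (N (b (x3) (x4) (N (x5))))) + N (b (N (x1)) (N (x2)) (b (N (x3)) (N (x4)) (x5))) + N (b (N (x1)) (N (x2)) (b (N (x3)) (x4) (N (x5)))) + N (b (N (x1)) (N (x2)) (b (x3) (N (x4)) (N (x5)))) + N (b (N (x1)) (x2) (N (N (N (b (x3) (x4) (x5)))))) - N (b (N (x1)) (x2) (N (N (b (N (x3)) (x4) (x5))))) - N (b (N (x1)) (x2) (N (N (b (x3) (N (x4)) (x5))))) - N (b (N (x1)) (x2) (N (N (b (x3) (x4) (N (x5)))))) + N (b (N (x1)) (x2) (N (b (N (x3)) (N (x4)) (x5)))) + N (b (N (x1)) (x2) (N (b (N (x3)) (x4) (N (x5))))) + N (b (N (x1)) (x2) (N (b (x3) (N (x4)) (N (x5))))) - N (b (N (x3)) (N (N (N (b (x1) (x2) (x4))))) (x5)) + N (b (N (x3)) (N (N (b (N (x1)) (x2) (x4)))) (x5)) + N (b (N (x3)) (N (N (b (x1) (N (x2)) (x4)))) (x5)) + N (b (N (x3)) (N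 (N (b (x1) (x2) (N (x4))))) (x5)) - N (b (N (x3)) (N (N (b (x1) (x2) (x4)))) (N (x5))) - N (b (N (x3)) (N (b (N (x1)) (N (x2)) (x4))) (x5)) - N (b (N (x3)) (N (b (N (x1)) (x2) (N (x4)))) (x5)) + N (b (N (x3)) (N (b (N (x1)) (x2) (x4))) (N (x5))) - N (b (N (x3)) (N (b (x1) (N (x2)) (N (x4)))) (x5)) + N (b (N (x3)) (N (b (x1) (N (x2)) (x4))) (N (x5))) + N (b (N (x3)) (N (b (x1) (x2) (N (x4)))) (N (x5))) - N (b (N (x3)) (N (x4)) (N (N (b (x1) (x2) (x5))))) + N (b (N (x3)) (N (x4)) (N (b (N (x1)) (x2) (x5)))) + N (b (N (x3)) (N (x4)) (N (b (x1) (N (x2)) (x5)))) + N (b (N (x3)) (N (x4)) (N (b (x1) (x2) (N (x5))))) - N (b (N (x3)) (N (x4)) (b (N (x1)) (N (x2)) (x5))) - N (b (N (x3)) (N (x4)) (b (N (x1)) (x2) (N (x5)))) - N (b (N (x3)) (N (x4)) (b (x1) (N (x2)) (N (x5)))) - N (b (N (x3)) (b (N (x1)) (N (x2)) (x4)) (N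 (x5))) - N (b (N (x3)) (b (N (x1)) (x2) (N (x4))) (N (x5))) - N (b (N (x3)) (b (x1) (N (x2)) (N (x4))) (N (x5))) - N (b (N (x3)) (x4) (N (N (N (b (x1) (x2) (x5)))))) + N (b (N (x3)) (x4) (N (N (b (N (x1)) (x2) (x5))))) + N (b (N (x3)) (x4) (N (N (b (x1) (N (x2)) (x5))))) + N (b (N (x3)) (x4) (N (N (b (x1) (x2) (N (x5)))))) - N (b (N (x3)) (x4) (N (b (N (x1)) (N (x2)) (x5)))) - N (b (N (x3)) (x4) (N (b (N (x1)) (x2) (N (x5))))) - N (b (N (x3)) (x4) (N (b (x1) (N (x2)) (N (x5))))) - N (b (b (N (x1)) (N (x2)) (x3)) (N (x4)) (N (x5))) - N (b (b (N (x1)) (x2) (N (x3))) (N (x4)) (N (x5))) - N (b (b (x1) (N (x2)) (N (x3))) (N (x4)) (N (x5))) + N (b (x1) (N (x2)) (N (N (N (b (x3) (x4) (x5)))))) - N (b (x1) (N (x2)) (N (N (b (N (x3)) (x4) (x5))))) - N (b (x1) (N (x2)) (N (N (b (x3) (N (x4)) (x5))))) - N (b (x1) (N (x2)) (N (N (b (x3)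 (x4) (N (x5)))))) + N (b (x1) (N (x2)) (N (b (N (x3)) (N (x4)) (x5)))) + N (b (x1) (N (x2)) (N (b (N (x3)) (x4) (N (x5))))) + N (b (x1) (N (x2)) (N (b (x3) (N (x4)) (N (x5))))) - N (b (x3) (N (N (N (b (x1) (x2) (x4))))) (N (x5))) + N (b (x3) (N (N (b (N (x1)) (x2) (x4)))) (N (x5))) + N (b (x3) (N (N (b (x1) (N (x2)) (x4)))) (N (x5))) + N (b (x3) (N (N (b (x1) (x2) (N (x4))))) (N (x5))) - N (b (x3) (N (b (N (x1)) (N (x2)) (x4))) (N (x5))) - N (b (x3) (N (b (N (x1)) (x2) (N (x4)))) (N (x5))) - N (b (x3) (N (b (x1) (N (x2)) (N (x4)))) (N (x5))) - N (b (x3) (N (x4)) (N (N (N (b (x1) (x2) (x5)))))) + N (b (x3) (N (x4)) (N (N (b (N (x1)) (x2) (x5))))) + N (b (x3) (N (x4)) (N (N (b (x1) (N (x2)) (x5))))) + N (b (x3) (N (x4)) (N (N (b (x1) (x2) (N (x5)))))) - N (b (x3) (N (x4)) (N (b (N (x1)) (N (x2)) (x5)))) - N (b (x3) (N (x4)) (N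 (b (N (x1)) (x2) (N (x5))))) - N (b (x3) (N (x4)) (N (b (x1) (N (x2)) (N (x5)))))) = 0 := by
      intro t
      have k345 := key t x3 x4 x5
      have e1 := key t x1 x2 (nijB b N t x3 x4 x5); rw [k345] at e1
      have k123 := key t x1 x2 x3
      have e2 := key t (nijB b N t x1 x2 x3) x4 x5; rw [k123] at e2
      have k124 := key t x1 x2 x4
      have e3 := key t x3 (nijB b N t x1 x2 x4) x5; rw [k124] at e3
      have k125 := key t x1 x2 x5
      have e4 := key t x3 x4 (nijB b N t x1 x2 x5); rw [k125] at e4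
      have main := hFI (x1 + t • N x1) (x2 + t • N x2) (x3 + t • N x3) (x4 + t • N x4)
        (x5 + t • N x5)
      have struct : (nijB b N t x1 x2 (nijB b N t x3 x4 x5)
            + t • N (nijB b N t x1 x2 (nijB b N t x3 x4 x5)))
          - (nijB b N t (nijB b N t x1 x2 x3) x4 x5
            + t • N (nijB b N t (nijB b N t x1 x2 x3) x4 x5))
          - (nijB b N t x3 (nijB b N t x1 x2 x4) x5
            + t • N (nijB b N t x3 (nijB b N t x1 x2 x4) x5))
          - (nijB b N t x3 x4 (nijB b N t x1 x2 x5)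
            + t • N (nijB b N t x3 x4 (nijB b N t x1 x2 x5))) = 0 := by
        linear_combination (norm := module) e1 - e2 - e3 - e4 + main
      simp only [nijB, deformedBracket, map_add, map_sub, map_smul, ba1, ba2, ba3, bm1, bm2, bm3,
        bq1, bq2, bq3, smul_add, smul_sub] at struct
      linear_combination (norm := module) struct
    obtain ⟨h0, h1, h2, h3, h4, h5⟩ := aux_poly_vanish _ _ _ _ _ _ hP
    have n3 : (-N (N (N (N (b (b (x1) (x2) (x3)) (x4) (x5))))) + N (N (N (N (b (x1) (x2) (b (x3) (x4) (x5)))))) - N (N (N (N (b (x3) (b (x1) (x2) (x4)) (x5))))) - N (N (N (N (b (x3) (x4) (b (x1) (x2) (x5)))))) + N (N (N (b (N (b (x1) (x2) (x3))) (x4) (x5)))) - N (N (N (b (N (x1)) (x2) (b (x3) (x4) (x5))))) + N (N (N (b (N (x3)) (b (x1) (x2) (x4)) (x5)))) + N (N (N (b (N (x3)) (x4) (b (x1) (x2) (x5))))) + N (N (N (b (b (x1) (x2) (x3)) (N (x4)) (x5)))) + N (N (N (b (b (x1) (x2) (x3)) (x4) (N (x5))))) - N (N (N (b (x1) (N (x2))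 (b (x3) (x4) (x5))))) - N (N (N (b (x1) (x2) (N (b (x3) (x4) (x5)))))) + N (N (N (b (x3) (N (b (x1) (x2) (x4))) (x5)))) + N (N (N (b (x3) (N (x4)) (b (x1) (x2) (x5))))) + N (N (N (b (x3) (b (x1) (x2) (x4)) (N (x5))))) + N (N (N (b (x3) (x4) (N (b (x1) (x2) (x5)))))) - N (N (b (N (b (x1) (x2) (x3))) (N (x4)) (x5))) - N (N (b (N (b (x1) (x2) (x3))) (x4) (N (x5)))) + N (N (b (N (x1)) (N (x2)) (b (x3) (x4) (x5)))) + N (N (b (N (x1)) (x2) (N (b (x3) (x4) (x5))))) - N (N (b (N (x3)) (N (b (x1) (x2) (x4))) (x5))) - N (N (b (N (x3)) (N (x4)) (b (x1) (x2) (x5)))) - N (N (b (N (x3)) (b (x1) (x2) (x4)) (N (x5)))) - N (N (b (N (x3)) (x4) (N (b (x1) (x2) (x5))))) - N (N (b (b (x1) (x2) (x3)) (N (x4)) (N (x5)))) + N (N (b (x1) (N (x2)) (N (b (x3) (x4) (x5))))) - N (N (b (x3) (N (b (x1) (x2) (x4))) (N (x5)))) - N (N (b (x3) (N (x4)) (N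 (b (x1) (x2) (x5))))) - N (b (N (N (N (b (x1) (x2) (x3))))) (x4) (x5)) + N (b (N (N (b (N (x1)) (x2) (x3)))) (x4) (x5)) + N (b (N (N (b (x1) (N (x2)) (x3)))) (x4) (x5)) + N (b (N (N (b (x1) (x2) (N (x3))))) (x4) (x5)) - N (b (N (b (N (x1)) (N (x2)) (x3))) (x4) (x5)) - N (b (N (b (N (x1)) (x2) (N (x3)))) (x4) (x5)) - N (b (N (b (x1) (N (x2)) (N (x3)))) (x4) (x5)) + N (b (N (b (x1) (x2) (x3))) (N (x4)) (N (x5))) - N (b (N (x1)) (N (x2)) (N (b (x3) (x4) (x5)))) + N (b (N (x1)) (N (x2)) (b (N (x3)) (x4) (x5))) + N (b (N (x1)) (N (x2)) (b (x3) (N (x4)) (x5))) + N (b (N (x1)) (N (x2)) (b (x3) (x4) (N (x5)))) + N (b (N (x1)) (x2) (b (N (x3)) (N (x4)) (x5))) + N (b (N (x1)) (x2) (b (N (x3)) (x4) (N (x5)))) + N (b (N (x1)) (x2) (b (x3) (N (x4)) (N (x5)))) + N (b (N (x3)) (N (b (x1) (x2) (x4))) (N (x5))) + N (b (N (x3)) (N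 (x4)) (N (b (x1) (x2) (x5)))) - N (b (N (x3)) (N (x4)) (b (N (x1)) (x2) (x5))) - N (b (N (x3)) (N (x4)) (b (x1) (N (x2)) (x5))) - N (b (N (x3)) (N (x4)) (b (x1) (x2) (N (x5)))) - N (b (N (x3)) (b (N (x1)) (N (x2)) (x4)) (x5)) - N (b (N (x3)) (b (N (x1)) (x2) (N (x4))) (x5)) - N (b (N (x3)) (b (N (x1)) (x2) (x4)) (N (x5))) - N (b (N (x3)) (b (x1) (N (x2)) (N (x4))) (x5)) - N (b (N (x3)) (b (x1) (N (x2)) (x4)) (N (x5))) - N (b (N (x3)) (b (x1) (x2) (N (x4))) (N (x5))) - N (b (N (x3)) (x4) (b (N (x1)) (N (x2)) (x5))) - N (b (N (x3)) (x4) (b (N (x1)) (x2) (N (x5)))) - N (b (N (x3)) (x4) (b (x1) (N (x2)) (N (x5)))) - N (b (b (N (x1)) (N (x2)) (x3)) (N (x4)) (x5)) - N (b (b (N (x1)) (N (x2)) (x3)) (x4) (N (x5))) - N (b (b (N (x1)) (x2) (N (x3))) (N (x4)) (x5)) - N (b (b (N (x1)) (x2) (N (x3))) (x4) (N (x5)))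 - N (b (b (N (x1)) (x2) (x3)) (N (x4)) (N (x5))) - N (b (b (x1) (N (x2)) (N (x3))) (N (x4)) (x5)) - N (b (b (x1) (N (x2)) (N (x3))) (x4) (N (x5))) - N (b (b (x1) (N (x2)) (x3)) (N (x4)) (N (x5))) - N (b (b (x1) (x2) (N (x3))) (N (x4)) (N (x5))) + N (b (x1) (N (x2)) (b (N (x3)) (N (x4)) (x5))) + N (b (x1) (N (x2)) (b (N (x3)) (x4) (N (x5)))) + N (b (x1) (N (x2)) (b (x3) (N (x4)) (N (x5)))) + N (b (x1) (x2) (N (N (N (b (x3) (x4) (x5)))))) - N (b (x1) (x2) (N (N (b (N (x3)) (x4) (x5))))) - N (b (x1) (x2) (N (N (b (x3) (N (x4)) (x5))))) - N (b (x1) (x2) (N (N (b (x3) (x4) (N (x5)))))) + N (b (x1) (x2) (N (b (N (x3)) (N (x4)) (x5)))) + N (b (x1) (x2) (N (b (N (x3)) (x4) (N (x5))))) + N (b (x1) (x2) (N (b (x3) (N (x4)) (N (x5))))) - N (b (x3) (N (N (N (b (x1) (x2) (x4))))) (x5)) + N (b (x3) (N (N (b (N (x1)) (x2) (x4)))) (x5))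 + N (b (x3) (N (N (b (x1) (N (x2)) (x4)))) (x5)) + N (b (x3) (N (N (b (x1) (x2) (N (x4))))) (x5)) - N (b (x3) (N (b (N (x1)) (N (x2)) (x4))) (x5)) - N (b (x3) (N (b (N (x1)) (x2) (N (x4)))) (x5)) - N (b (x3) (N (b (x1) (N (x2)) (N (x4)))) (x5)) - N (b (x3) (N (x4)) (b (N (x1)) (N (x2)) (x5))) - N (b (x3) (N (x4)) (b (N (x1)) (x2) (N (x5)))) - N (b (x3) (N (x4)) (b (x1) (N (x2)) (N (x5)))) - N (b (x3) (b (N (x1)) (N (x2)) (x4)) (N (x5))) - N (b (x3) (b (N (x1)) (x2) (N (x4))) (N (x5))) - N (b (x3) (b (x1) (N (x2)) (N (x4))) (N (x5))) - N (b (x3) (x4) (N (N (N (b (x1) (x2) (x5)))))) + N (b (x3) (x4) (N (N (b (N (x1)) (x2) (x5))))) + N (b (x3) (x4) (N (N (b (x1) (N (x2)) (x5))))) + N (b (x3) (x4) (N (N (b (x1) (x2) (N (x5)))))) - N (b (x3) (x4) (N (b (N (x1)) (N (x2)) (x5)))) - N (b (x3) (x4) (N (b (N (x1)) (x2) (N (x5)))))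 - N (b (x3) (x4) (N (b (x1) (N (x2)) (N (x5)))))) = (0 : G) := by
      have : N (-N (N (N (b (b (x1) (x2) (x3)) (x4) (x5)))) + N (N (N (b (x1) (x2) (b (x3) (x4) (x5))))) - N (N (N (b (x3) (b (x1) (x2) (x4)) (x5)))) - N (N (N (b (x3) (x4) (b (x1) (x2) (x5))))) + N (N (b (N (b (x1) (x2) (x3))) (x4) (x5))) - N (N (b (N (x1)) (x2) (b (x3) (x4) (x5)))) + N (N (b (N (x3)) (b (x1) (x2) (x4)) (x5))) + N (N (b (N (x3)) (x4) (b (x1) (x2) (x5)))) + N (N (b (b (x1) (x2) (x3)) (N (x4)) (x5))) + N (N (b (b (x1) (x2) (x3)) (x4) (N (x5)))) - N (N (b (x1) (N (x2)) (b (x3) (x4) (x5)))) - N (N (b (x1) (x2) (N (b (x3) (x4) (x5))))) + N (N (b (x3) (N (b (x1) (x2) (x4))) (x5))) + N (N (b (x3) (N (x4)) (b (x1) (x2) (x5)))) + N (N (b (x3) (b (x1) (x2) (x4)) (N (x5)))) + N (N (b (x3) (x4) (N (b (x1) (x2) (x5))))) - N (b (N (b (x1) (x2) (x3))) (N (x4))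 (x5)) - N (b (N (b (x1) (x2) (x3))) (x4) (N (x5))) + N (b (N (x1)) (N (x2)) (b (x3) (x4) (x5))) + N (b (N (x1)) (x2) (N (b (x3) (x4) (x5)))) - N (b (N (x3)) (N (b (x1) (x2) (x4))) (x5)) - N (b (N (x3)) (N (x4)) (b (x1) (x2) (x5))) - N (b (N (x3)) (b (x1) (x2) (x4)) (N (x5))) - N (b (N (x3)) (x4) (N (b (x1) (x2) (x5)))) - N (b (b (x1) (x2) (x3)) (N (x4)) (N (x5))) + N (b (x1) (N (x2)) (N (b (x3) (x4) (x5)))) - N (b (x3) (N (b (x1) (x2) (x4))) (N (x5))) - N (b (x3) (N (x4)) (N (b (x1) (x2) (x5)))) - b (N (N (N (b (x1) (x2) (x3))))) (x4) (x5) + b (N (N (b (N (x1)) (x2) (x3)))) (x4) (x5) + b (N (N (b (x1) (N (x2)) (x3)))) (x4) (x5) + b (N (N (b (x1) (x2) (N (x3))))) (x4) (x5) - b (N (b (N (x1)) (N (x2)) (x3))) (x4) (x5) - b (N (b (N (x1)) (x2) (N (x3)))) (x4) (x5) - b (N (b (x1) (N (x2)) (N (x3)))) (x4) (x5) + b (N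 (b (x1) (x2) (x3))) (N (x4)) (N (x5)) - b (N (x1)) (N (x2)) (N (b (x3) (x4) (x5))) + b (N (x1)) (N (x2)) (b (N (x3)) (x4) (x5)) + b (N (x1)) (N (x2)) (b (x3) (N (x4)) (x5)) + b (N (x1)) (N (x2)) (b (x3) (x4) (N (x5))) + b (N (x1)) (x2) (b (N (x3)) (N (x4)) (x5)) + b (N (x1)) (x2) (b (N (x3)) (x4) (N (x5))) + b (N (x1)) (x2) (b (x3) (N (x4)) (N (x5))) + b (N (x3)) (N (b (x1) (x2) (x4))) (N (x5)) + b (N (x3)) (N (x4)) (N (b (x1) (x2) (x5))) - b (N (x3)) (N (x4)) (b (N (x1)) (x2) (x5)) - b (N (x3)) (N (x4)) (b (x1) (N (x2)) (x5)) - b (N (x3)) (N (x4)) (b (x1) (x2) (N (x5))) - b (N (x3)) (b (N (x1)) (N (x2)) (x4)) (x5) - b (N (x3)) (b (N (x1)) (x2) (N (x4))) (x5) - b (N (x3)) (b (N (x1)) (x2) (x4)) (N (x5)) - b (N (x3)) (b (x1) (N (x2)) (N (x4))) (x5) - b (N (x3)) (b (x1) (N (x2)) (x4)) (N (x5)) -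 b (N (x3)) (b (x1) (x2) (N (x4))) (N (x5)) - b (N (x3)) (x4) (b (N (x1)) (N (x2)) (x5)) - b (N (x3)) (x4) (b (N (x1)) (x2) (N (x5))) - b (N (x3)) (x4) (b (x1) (N (x2)) (N (x5))) - b (b (N (x1)) (N (x2)) (x3)) (N (x4)) (x5) - b (b (N (x1)) (N (x2)) (x3)) (x4) (N (x5)) - b (b (N (x1)) (x2) (N (x3))) (N (x4)) (x5) - b (b (N (x1)) (x2) (N (x3))) (x4) (N (x5)) - b (b (N (x1)) (x2) (x3)) (N (x4)) (N (x5)) - b (b (x1) (N (x2)) (N (x3))) (N (x4)) (x5) - b (b (x1) (N (x2)) (N (x3))) (x4) (N (x5)) - b (b (x1) (N (x2)) (x3)) (N (x4)) (N (x5)) - b (b (x1) (x2) (N (x3))) (N (x4)) (N (x5)) + b (x1) (N (x2)) (b (N (x3)) (N (x4)) (x5)) + b (x1) (N (x2)) (b (N (x3)) (x4) (N (x5))) + b (x1) (N (x2)) (b (x3) (N (x4)) (N (x5))) + b (x1) (x2) (N (N (N (b (x3) (x4) (x5))))) - b (x1) (x2) (N (N (b (N (x3)) (x4) (x5)))) -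 b (x1) (x2) (N (N (b (x3) (N (x4)) (x5)))) - b (x1) (x2) (N (N (b (x3) (x4) (N (x5))))) + b (x1) (x2) (N (b (N (x3)) (N (x4)) (x5))) + b (x1) (x2) (N (b (N (x3)) (x4) (N (x5)))) + b (x1) (x2) (N (b (x3) (N (x4)) (N (x5)))) - b (x3) (N (N (N (b (x1) (x2) (x4))))) (x5) + b (x3) (N (N (b (N (x1)) (x2) (x4)))) (x5) + b (x3) (N (N (b (x1) (N (x2)) (x4)))) (x5) + b (x3) (N (N (b (x1) (x2) (N (x4))))) (x5) - b (x3) (N (b (N (x1)) (N (x2)) (x4))) (x5) - b (x3) (N (b (N (x1)) (x2) (N (x4)))) (x5) - b (x3) (N (b (x1) (N (x2)) (N (x4)))) (x5) - b (x3) (N (x4)) (b (N (x1)) (N (x2)) (x5)) - b (x3) (N (x4)) (b (N (x1)) (x2) (N (x5))) - b (x3) (N (x4)) (b (x1) (N (x2)) (N (x5))) - b (x3) (b (N (x1)) (N (x2)) (x4)) (N (x5)) - b (x3) (b (N (x1)) (x2) (N (x4))) (N (x5)) - b (x3) (b (x1) (N (x2)) (N (x4))) (N (x5)) - b (x3) (x4)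 (N (N (N (b (x1) (x2) (x5))))) + b (x3) (x4) (N (N (b (N (x1)) (x2) (x5)))) + b (x3) (x4) (N (N (b (x1) (N (x2)) (x5)))) + b (x3) (x4) (N (N (b (x1) (x2) (N (x5))))) - b (x3) (x4) (N (b (N (x1)) (N (x2)) (x5))) - b (x3) (x4) (N (b (N (x1)) (x2) (N (x5)))) - b (x3) (x4) (N (b (x1) (N (x2)) (N (x5))))) = 0 := by rw [h3]; exact map_zero N
      simpa only [map_add, map_sub, map_neg] using this
    have n2 : (N (N (b (N (x1)) (N (x2)) (b (x3) (x4) (x5)))) + N (N (b (N (x1)) (x2) (b (N (x3)) (x4) (x5)))) + N (N (b (N (x1)) (x2) (b (x3) (N (x4)) (x5)))) + N (N (b (N (x1)) (x2) (b (x3) (x4) (N (x5))))) - N (N (b (N (x3)) (N (x4)) (b (x1) (x2) (x5)))) - N (N (b (N (x3)) (b (N (x1)) (x2) (x4)) (x5))) - N (N (b (N (x3)) (b (x1) (N (x2)) (x4)) (x5))) - N (N (b (N (x3)) (b (x1) (x2) (N (x4))) (x5))) - N (N (b (N (x3)) (b (x1) (x2) (x4)) (N (x5)))) - N (N (b (N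 (x3)) (x4) (b (N (x1)) (x2) (x5)))) - N (N (b (N (x3)) (x4) (b (x1) (N (x2)) (x5)))) - N (N (b (N (x3)) (x4) (b (x1) (x2) (N (x5))))) - N (N (b (b (N (x1)) (N (x2)) (x3)) (x4) (x5))) - N (N (b (b (N (x1)) (x2) (N (x3))) (x4) (x5))) - N (N (b (b (N (x1)) (x2) (x3)) (N (x4)) (x5))) - N (N (b (b (N (x1)) (x2) (x3)) (x4) (N (x5)))) - N (N (b (b (x1) (N (x2)) (N (x3))) (x4) (x5))) - N (N (b (b (x1) (N (x2)) (x3)) (N (x4)) (x5))) - N (N (b (b (x1) (N (x2)) (x3)) (x4) (N (x5)))) - N (N (b (b (x1) (x2) (N (x3))) (N (x4)) (x5))) - N (N (b (b (x1) (x2) (N (x3))) (x4) (N (x5)))) - N (N (b (b (x1) (x2) (x3)) (N (x4)) (N (x5)))) + N (N (b (x1) (N (x2)) (b (N (x3)) (x4) (x5)))) + N (N (b (x1) (N (x2)) (b (x3) (N (x4)) (x5)))) + N (N (b (x1) (N (x2)) (b (x3) (x4) (N (x5))))) + N (N (b (x1) (x2) (b (N (x3)) (N (x4)) (x5)))) +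 N (N (b (x1) (x2) (b (N (x3)) (x4) (N (x5))))) + N (N (b (x1) (x2) (b (x3) (N (x4)) (N (x5))))) - N (N (b (x3) (N (x4)) (b (N (x1)) (x2) (x5)))) - N (N (b (x3) (N (x4)) (b (x1) (N (x2)) (x5)))) - N (N (b (x3) (N (x4)) (b (x1) (x2) (N (x5))))) - N (N (b (x3) (b (N (x1)) (N (x2)) (x4)) (x5))) - N (N (b (x3) (b (N (x1)) (x2) (N (x4))) (x5))) - N (N (b (x3) (b (N (x1)) (x2) (x4)) (N (x5)))) - N (N (b (x3) (b (x1) (N (x2)) (N (x4))) (x5))) - N (N (b (x3) (b (x1) (N (x2)) (x4)) (N (x5)))) - N (N (b (x3) (b (x1) (x2) (N (x4))) (N (x5)))) - N (N (b (x3) (x4) (b (N (x1)) (N (x2)) (x5)))) - N (N (b (x3) (x4) (b (N (x1)) (x2) (N (x5))))) - N (N (b (x3) (x4) (b (x1) (N (x2)) (N (x5)))))) = (0 : G) := by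
      have : N (N (b (N (x1)) (N (x2)) (b (x3) (x4) (x5)) + b (N (x1)) (x2) (b (N (x3)) (x4) (x5)) + b (N (x1)) (x2) (b (x3) (N (x4)) (x5)) + b (N (x1)) (x2) (b (x3) (x4) (N (x5))) - b (N (x3)) (N (x4)) (b (x1) (x2) (x5)) - b (N (x3)) (b (N (x1)) (x2) (x4)) (x5) - b (N (x3)) (b (x1) (N (x2)) (x4)) (x5) - b (N (x3)) (b (x1) (x2) (N (x4))) (x5) - b (N (x3)) (b (x1) (x2) (x4)) (N (x5)) - b (N (x3)) (x4) (b (N (x1)) (x2) (x5)) - b (N (x3)) (x4) (b (x1) (N (x2)) (x5)) - b (N (x3)) (x4) (b (x1) (x2) (N (x5))) - b (b (N (x1)) (N (x2)) (x3)) (x4) (x5) - b (b (N (x1)) (x2) (N (x3))) (x4) (x5) - b (b (N (x1)) (x2) (x3)) (N (x4)) (x5) - b (b (N (x1)) (x2) (x3)) (x4) (N (x5)) - b (b (x1) (N (x2)) (N (x3))) (x4) (x5) - b (b (x1) (N (x2)) (x3)) (N (x4)) (x5) - b (b (x1) (N (x2)) (x3)) (x4) (N (x5)) - b (b (x1) (x2)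 (N (x3))) (N (x4)) (x5) - b (b (x1) (x2) (N (x3))) (x4) (N (x5)) - b (b (x1) (x2) (x3)) (N (x4)) (N (x5)) + b (x1) (N (x2)) (b (N (x3)) (x4) (x5)) + b (x1) (N (x2)) (b (x3) (N (x4)) (x5)) + b (x1) (N (x2)) (b (x3) (x4) (N (x5))) + b (x1) (x2) (b (N (x3)) (N (x4)) (x5)) + b (x1) (x2) (b (N (x3)) (x4) (N (x5))) + b (x1) (x2) (b (x3) (N (x4)) (N (x5))) - b (x3) (N (x4)) (b (N (x1)) (x2) (x5)) - b (x3) (N (x4)) (b (x1) (N (x2)) (x5)) - b (x3) (N (x4)) (b (x1) (x2) (N (x5))) - b (x3) (b (N (x1)) (N (x2)) (x4)) (x5) - b (x3) (b (N (x1)) (x2) (N (x4))) (x5) - b (x3) (b (N (x1)) (x2) (x4)) (N (x5)) - b (x3) (b (x1) (N (x2)) (N (x4))) (x5) - b (x3) (b (x1) (N (x2)) (x4)) (N (x5)) - b (x3) (b (x1) (x2) (N (x4))) (N (x5)) - b (x3) (x4) (b (N (x1)) (N (x2)) (x5)) - b (x3) (x4) (b (N (x1)) (x2) (N (x5))) -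 b (x3) (x4) (b (x1) (N (x2)) (N (x5))))) = 0 := by rw [h2]; rw [map_zero, map_zero]
      simpa only [map_add, map_sub, map_neg] using this
    have n1 : (N (N (N (b (N (x1)) (x2) (b (x3) (x4) (x5))))) - N (N (N (b (N (x3)) (b (x1) (x2) (x4)) (x5)))) - N (N (N (b (N (x3)) (x4) (b (x1) (x2) (x5))))) - N (N (N (b (b (N (x1)) (x2) (x3)) (x4) (x5)))) - N (N (N (b (b (x1) (N (x2)) (x3)) (x4) (x5)))) - N (N (N (b (b (x1) (x2) (N (x3))) (x4) (x5)))) - N (N (N (b (b (x1) (x2) (x3)) (N (x4)) (x5)))) - N (N (N (b (b (x1) (x2) (x3)) (x4) (N (x5))))) + N (N (N (b (x1) (N (x2)) (b (x3) (x4) (x5))))) + N (N (N (b (x1) (x2) (b (N (x3)) (x4) (x5))))) + N (N (N (b (x1) (x2) (b (x3) (N (x4)) (x5))))) + N (N (N (b (x1) (x2) (b (x3) (x4) (N (x5)))))) - N (N (N (b (x3) (N (x4)) (b (x1) (x2) (x5))))) - N (N (N (b (x3) (b (N (x1)) (x2) (x4)) (x5)))) - N (N (N (b (x3) (b (x1)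 (N (x2)) (x4)) (x5)))) - N (N (N (b (x3) (b (x1) (x2) (N (x4))) (x5)))) - N (N (N (b (x3) (b (x1) (x2) (x4)) (N (x5))))) - N (N (N (b (x3) (x4) (b (N (x1)) (x2) (x5))))) - N (N (N (b (x3) (x4) (b (x1) (N (x2)) (x5))))) - N (N (N (b (x3) (x4) (b (x1) (x2) (N (x5))))))) = (0 : G) := by
      have : N (N (N (b (N (x1)) (x2) (b (x3) (x4) (x5)) - b (N (x3)) (b (x1) (x2) (x4)) (x5) - b (N (x3)) (x4) (b (x1) (x2) (x5)) - b (b (N (x1)) (x2) (x3)) (x4) (x5) - b (b (x1) (N (x2)) (x3)) (x4) (x5) - b (b (x1) (x2) (N (x3))) (x4) (x5) - b (b (x1) (x2) (x3)) (N (x4)) (x5) - b (b (x1) (x2) (x3)) (x4) (N (x5)) + b (x1) (N (x2)) (b (x3) (x4) (x5)) + b (x1) (x2) (b (N (x3)) (x4) (x5)) + b (x1) (x2) (b (x3) (N (x4)) (x5)) + b (x1) (x2) (b (x3) (x4) (N (x5))) - b (x3) (N (x4)) (b (x1) (x2) (x5)) - b (x3) (b (N (x1)) (x2) (x4)) (x5)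 - b (x3) (b (x1) (N (x2)) (x4)) (x5) - b (x3) (b (x1) (x2) (N (x4))) (x5) - b (x3) (b (x1) (x2) (x4)) (N (x5)) - b (x3) (x4) (b (N (x1)) (x2) (x5)) - b (x3) (x4) (b (x1) (N (x2)) (x5)) - b (x3) (x4) (b (x1) (x2) (N (x5)))))) = 0 := by rw [h1]; rw [map_zero, map_zero, map_zero]
      simpa only [map_add, map_sub, map_neg] using this
    have n0 : (-N (N (N (N (b (b (x1) (x2) (x3)) (x4) (x5))))) + N (N (N (N (b (x1) (x2) (b (x3) (x4) (x5)))))) - N (N (N (N (b (x3) (b (x1) (x2) (x4)) (x5))))) - N (N (N (N (b (x3) (x4) (b (x1) (x2) (x5))))))) = (0 : G) := by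
      have : N (N (N (N (-b (b (x1) (x2) (x3)) (x4) (x5) + b (x1) (x2) (b (x3) (x4) (x5)) - b (x3) (b (x1) (x2) (x4)) (x5) - b (x3) (x4) (b (x1) (x2) (x5)))))) = 0 := by rw [h0]; rw [map_zero, map_zero, map_zero, map_zero]
      simpa only [map_add, map_sub, map_neg] using this
    simp only [deformedBracket, map_add, map_sub, ba1, ba2, ba3, bq1, bq2, bq3]
    linear_combination (norm := module) h4 - n3 + n2 - n1 + n0
end

section
/- Let N be a Nijenhuis operator on a compatible 3-Lie algebra (g,[·,·,·],{·,·,·}). Define ω₁(x,y,z) = [Nx,y,z] + [x,Ny,z] + [x,y,Nz] − N[x,y,z], ω̃₁(x,y,z) = [x,y,z]_N (the deformed bracket), and analogously ω₂, ω̃₂ for the second bracket. Then the six identities hold: (1) ω₁(x,y,z) = [Nx,y,z]+[x,Ny,z]+[x,y,Nz]−N[x,y,z]; (2) ω̃₁(x,y,z) + Nω₁(x,y,z) = [Nx,Ny,z]+[Nx,y,Nz]+[x,Ny,Nz]; (3) Nω̃₁(x,y,z) = [Nx,Ny,Nz]; and the analogous three identities (4)-(6) for {·,·,·}, ω₂,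 ω̃₂. Consequently Id + tN is a compatible 3-Lie algebra homomorphism from (g,[·,·,·]+tω₁+t²ω̃₁, {·,·,·}+tω₂+t²ω̃₂) to (g,[·,·,·],{·,·,·}) for every t. -/
lemma nij_two {K G : Type*} [Field K] [AddCommGroup G] [Module K G]
    (b : G → G → G → G) (ht : IsTrilinearMap K b) (N : G →ₗ[K] G)
    (hN : IsNijenhuis b N) (w : G → G → G → G)
    (hw : ∀ x y z, w x y z = b (N x) y z + b x (N y) z + b x y (N z) - N (b x y z)) :
    ∀ x y z, deformedBracket b N x y z + N (w x y z) =
      b (N x) (N y) z + b (N x) y (N z) + b x (N y) (N z) := by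
  intro x y z
  rw [hw, deformedBracket]
  simp only [map_add, map_sub]
  abel

lemma nij_three {K G : Type*} [Field K] [AddCommGroup G] [Module K G]
    (b : G → G → G → G) (N : G →ₗ[K] G) (hN : IsNijenhuis b N) :
    ∀ x y z, N (deformedBracket b N x y z) = b (N x) (N y) (N z) := by
  intro x y z
  rw [deformedBracket, ← hN x y z]

lemma nij_hom {K G : Type*} [Field K] [AddCommGroup G] [Module K G]
    (b : G → G → G → G) (ht : IsTrilinearMap K b) (N : G →ₗ[K] G)
    (hN : IsNijenhuis b N) (w : G → G → G → G)
    (hw : ∀ x y z, w x y z = b (N x) y z + b x (N y) z + b x y (N z) - N (b x y z)) :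
    ∀ (t : K) (x y z : G),
      (b x y z + t • w x y z + (t * t) • deformedBracket b N x y z)
        + t • N (b x y z + t • w x y z + (t * t) • deformedBracket b N x y z)
      = b (x + t • N x) (y + t • N y) (z + t • N z) := by
  intro t x y z
  have h2 := nij_two b ht N hN w hw x y z
  have h3 := nij_three b N hN x y z
  obtain ⟨l1, l2, l3⟩ := ht
  have e1 : ∀ u v, b (x + t • N x) u v = b x u v + t • b (N x) u v := by
    intro u v; rw [(l1 u v).map_add, (l1 u v).map_smul]
  have e2 : ∀ u v, b u (y + t • N y) v = b u y v + t • b u (N y) v := by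
    intro u v; rw [(l2 u v).map_add, (l2 u v).map_smul]
  have e3 : ∀ u v, b u v (z + t • N z) = b u v z + t • b u v (N z) := by
    intro u v; rw [(l3 u v).map_add, (l3 u v).map_smul]
  rw [e1, e2, e2, e3, e3, e3, e3]
  have hwN : w x y z + N (b x y z) = b (N x) y z + b x (N y) z + b x y (N z) := by
    rw [hw]; abel
  simp only [map_add, map_smul]
  rw [show N (w x y z) = (b (N x) (N y) z + b (N x) y (N z) + b x (N y) (N z))
      - deformedBracket b N x y z by rw [← h2]; abel, h3]
  rw [show N (b x y z) = (b (N x) y z + b x (N y) z + b x y (N z)) - w x y z by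
      rw [← hwN]; abel]
  module

theorem stmt9 {K G : Type*} [Field K] [CharZero K] [AddCommGroup G] [Module K G]
    (b₁ b₂ : G → G → G → G) (h₁ : Is3Lie K b₁) (h₂ : Is3Lie K b₂)
    (hc : Compat b₁ b₂) (N : G →ₗ[K] G)
    (hN₁ : IsNijenhuis b₁ N) (hN₂ : IsNijenhuis b₂ N)
    (w₁ w₂ : G → G → G → G)
    (hw₁ : ∀ x y z, w₁ x y z = b₁ (N x) y z + b₁ x (N y) z + b₁ x y (N z) - N (b₁ x y z))
    (hw₂ : ∀ x y z, w₂ x y z = b₂ (N x) y z + b₂ x (N y) z + b₂ x y (N z) - N (b₂ x y z)) :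
    (∀ x y z, w₁ x y z =
      b₁ (N x) y z + b₁ x (N y) z + b₁ x y (N z) - N (b₁ x y z)) ∧
    (∀ x y z, deformedBracket b₁ N x y z + N (w₁ x y z) =
      b₁ (N x) (N y) z + b₁ (N x) y (N z) + b₁ x (N y) (N z)) ∧
    (∀ x y z, N (deformedBracket b₁ N x y z) = b₁ (N x) (N y) (N z)) ∧
    (∀ x y z, w₂ x y z =
      b₂ (N x) y z + b₂ x (N y) z + b₂ x y (N z) - N (b₂ x y z)) ∧
    (∀ x y z, deformedBracket b₂ N x y z + N (w₂ x y z) =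
      b₂ (N x) (N y) z + b₂ (N x) y (N z) + b₂ x (N y) (N z)) ∧
    (∀ x y z, N (deformedBracket b₂ N x y z) = b₂ (N x) (N y) (N z)) ∧
    (∀ (t : K) (x y z : G),
      (b₁ x y z + t • w₁ x y z + (t * t) • deformedBracket b₁ N x y z)
        + t • N (b₁ x y z + t • w₁ x y z + (t * t) • deformedBracket b₁ N x y z)
      = b₁ (x + t • N x) (y + t • N y) (z + t • N z)) ∧
    (∀ (t : K) (x y z : G),
      (b₂ x y z + t • w₂ x y z + (t * t) • deformedBracket b₂ N x y z)
        + t • N (b₂ x y z + t • w₂ x y z + (t * t) • deformedBracket b₂ N x y z)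
      = b₂ (x + t • N x) (y + t • N y) (z + t • N z)) := by
  exact ⟨hw₁, nij_two b₁ h₁.1 N hN₁ w₁ hw₁, nij_three b₁ N hN₁, hw₂,
    nij_two b₂ h₂.1 N hN₂ w₂ hw₂, nij_three b₂ N hN₂,
    nij_hom b₁ h₁.1 N hN₁ w₁ hw₁, nij_hom b₂ h₂.1 N hN₂ w₂ hw₂⟩
end

section
/- Let (g,[·,·,·],{·,·,·}) be a compatible 3-Lie algebra and V a vector space with linear maps ρ, μ: Λ²g → gl(V). Then (V;ρ,μ) is a representation of the compatible 3-Lie algebra if and only if the brackets [x₁+v₁,x₂+v₂,x₃+v₃] = [x₁,x₂,x₃] + ρ(x₁,x₂)v₃ + ρ(x₂,x₃)v₁ + ρ(x₃,x₁)v₂ and {x₁+v₁,x₂+v₂,x₃+v₃} = {x₁,x₂,x₃} + μ(x₁,x₂)v₃ + μ(x₂,x₃)v₁ + μ(x₃,x₁)v₂ make g ⊕ V a compatible 3-Lie algebra (the semidirect product). -/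
section Aux
variable {K G V : Type*} [Field K] [AddCommGroup G] [Module K G]
  [AddCommGroup V] [Module K V]
variable {b b₁ b₂ : G → G → G → G} {ρ μ : G → G → Module.End K V}

lemma aux_sd_tri (hb : IsTrilinearMap K b) (hρ : IsRepMap K ρ) :
    IsTrilinearMap K (sdBracket b ρ) := by
  obtain ⟨hb1, hb2, hb3⟩ := hb
  obtain ⟨hρ1, hρ2, _⟩ := hρ
  refine ⟨fun q r => ⟨fun p p' => ?_, fun c p => ?_⟩,
    fun p r => ⟨fun q q' => ?_, fun c q => ?_⟩,
    fun p q => ⟨fun r r' => ?_, fun c r => ?_⟩⟩ <;>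
  · simp only [sdBracket, Prod.fst_add, Prod.snd_add, Prod.smul_fst, Prod.smul_snd,
      (hb1 _ _).map_add, (hb2 _ _).map_add, (hb3 _ _).map_add,
      (hb1 _ _).map_smul, (hb2 _ _).map_smul, (hb3 _ _).map_smul,
      (hρ1 _).map_add, (hρ2 _).map_add, (hρ1 _).map_smul, (hρ2 _).map_smul,
      LinearMap.add_apply, LinearMap.smul_apply, map_add, map_smul,
      Prod.mk_add_mk, Prod.smul_mk, smul_add, Prod.mk.injEq]
    try refine ⟨by first | rfl | trivial | abel, by first | rfl | trivial | abel⟩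

lemma aux_sd_skew (hb : IsSkewSym b) (hρ : IsRepMap K ρ) :
    IsSkewSym (sdBracket b ρ) := by
  obtain ⟨hs1, hs2⟩ := hb
  have sk := hρ.2.2
  constructor <;> intro p q r <;>
  · simp only [sdBracket, Prod.neg_mk, Prod.mk.injEq]
    constructor
    · first | exact hs1 _ _ _ | exact hs2 _ _ _
    · rw [sk p.1 q.1, sk q.1 r.1, sk r.1 p.1]
      simp only [LinearMap.neg_apply]
      abel

lemma aux_skp (hρ : IsRepMap K ρ) : ∀ x y (v : V), ρ x y v = -(ρ y x v) := by
  intro x y v; rw [hρ.2.2 x y]; simp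

lemma aux_sd_fi (hρ : IsRepMap K ρ) (hfi : FundIdent b) (hr : Is3LieRep b ρ) :
    FundIdent (sdBracket b ρ) := by
  have sk := aux_skp hρ
  have R1 : ∀ x₁ x₂ x₃ x₄ (v : V), ρ x₁ x₂ (ρ x₃ x₄ v) =
      ρ (b x₁ x₂ x₃) x₄ v + ρ x₃ (b x₁ x₂ x₄) v + ρ x₃ x₄ (ρ x₁ x₂ v) := by
    intro x₁ x₂ x₃ x₄ v
    simpa [Module.End.mul_apply, LinearMap.add_apply] using
      LinearMap.ext_iff.mp (hr.1 x₁ x₂ x₃ x₄) v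
  have R2 : ∀ x₁ x₂ x₃ x₄ (v : V), ρ x₁ (b x₂ x₃ x₄) v =
      ρ x₃ x₄ (ρ x₁ x₂ v) - ρ x₂ x₄ (ρ x₁ x₃ v) + ρ x₂ x₃ (ρ x₁ x₄ v) := by
    intro x₁ x₂ x₃ x₄ v
    simpa [Module.End.mul_apply, LinearMap.add_apply, LinearMap.sub_apply] using
      LinearMap.ext_iff.mp (hr.2 x₁ x₂ x₃ x₄) v
  rintro ⟨x₁, v₁⟩ ⟨x₂, v₂⟩ ⟨x₃, v₃⟩ ⟨x₄, v₄⟩ ⟨x₅, v₅⟩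
  simp only [sdBracket, Prod.mk_add_mk, Prod.mk.injEq]
  refine ⟨hfi x₁ x₂ x₃ x₄ x₅, ?_⟩
  have V1 : ρ x₂ (b x₃ x₄ x₅) v₁ =
      ρ x₄ x₅ (ρ x₂ x₃ v₁) + ρ x₅ x₃ (ρ x₂ x₄ v₁) + ρ x₃ x₄ (ρ x₂ x₅ v₁) := by
    rw [R2 x₂ x₃ x₄ x₅ v₁, sk x₃ x₅ (ρ x₂ x₄ v₁)]
    abel
  have V2 : ρ (b x₃ x₄ x₅) x₁ v₂ =
      ρ x₄ x₅ (ρ x₃ x₁ v₂) + ρ x₅ x₃ (ρ x₄ x₁ v₂) + ρ x₃ x₄ (ρ x₅ x₁ v₂) := by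
    rw [sk (b x₃ x₄ x₅) x₁ v₂, R2 x₁ x₃ x₄ x₅ v₂, sk x₃ x₁ v₂, sk x₄ x₁ v₂,
      sk x₅ x₁ v₂]
    simp only [map_neg]
    rw [sk x₅ x₃ (ρ x₁ x₄ v₂)]
    abel
  simp only [map_add]
  rw [R1 x₁ x₂ x₃ x₄ v₅, R1 x₁ x₂ x₄ x₅ v₃, R1 x₁ x₂ x₅ x₃ v₄, V1, V2]
  abel

lemma aux_b_zero (hb : IsTrilinearMap K b) :
    (∀ y z, b 0 y z = 0) ∧ (∀ x z, b x 0 z = 0) ∧ (∀ x y, b x y 0 = 0) :=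
  ⟨fun y z => (hb.1 y z).map_zero, fun x z => (hb.2.1 x z).map_zero,
   fun x y => (hb.2.2 x y).map_zero⟩

lemma aux_rep_of_fi (hb : IsTrilinearMap K b) (hρ : IsRepMap K ρ)
    (h : FundIdent (sdBracket b ρ)) : Is3LieRep b ρ := by
  obtain ⟨hb0l, hb0m, hb0r⟩ := aux_b_zero hb
  have hρ0l : ∀ y, ρ 0 y = 0 := fun y => (hρ.1 y).map_zero
  have hρ0r : ∀ x, ρ x 0 = 0 := fun x => (hρ.2.1 x).map_zero
  have sk := aux_skp hρ
  have R1 : ∀ x₁ x₂ x₃ x₄ (v : V), ρ x₁ x₂ (ρ x₃ x₄ v) =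
      ρ (b x₁ x₂ x₃) x₄ v + ρ x₃ (b x₁ x₂ x₄) v + ρ x₃ x₄ (ρ x₁ x₂ v) := by
    intro x₁ x₂ x₃ x₄ v
    have := congrArg Prod.snd (h (x₁, 0) (x₂, 0) (x₃, 0) (x₄, 0) (0, v))
    simpa [sdBracket, hb0l, hb0m, hb0r, hρ0l, hρ0r] using this
  have R2' : ∀ x₂ x₃ x₄ x₅ (v : V), ρ x₂ (b x₃ x₄ x₅) v =
      ρ x₄ x₅ (ρ x₂ x₃ v) + ρ x₅ x₃ (ρ x₂ x₄ v) + ρ x₃ x₄ (ρ x₂ x₅ v) := by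
    intro x₂ x₃ x₄ x₅ v
    have := congrArg Prod.snd (h (0, v) (x₂, 0) (x₃, 0) (x₄, 0) (x₅, 0))
    simpa [sdBracket, hb0l, hb0m, hb0r, hρ0l, hρ0r] using this
  constructor
  · intro x₁ x₂ x₃ x₄
    ext v
    simp only [Module.End.mul_apply, LinearMap.add_apply]
    exact R1 x₁ x₂ x₃ x₄ v
  · intro x₁ x₂ x₃ x₄
    ext v
    simp only [Module.End.mul_apply, LinearMap.add_apply, LinearMap.sub_apply]
    rw [R2' x₁ x₂ x₃ x₄ v, sk x₄ x₂ (ρ x₁ x₃ v)]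
    abel
lemma aux_shunt {W : Type*} [AddCommGroup W] {A B X Y : W} (h : X = Y)
    (e : A + Y = B + X) : A = B := by
  rw [h] at e; exact add_right_cancel e

lemma aux_sd_compat (hρ : IsRepMap K ρ) (hμ : IsRepMap K μ) (hc : Compat b₁ b₂)
    (hcr : CompatRep b₁ b₂ ρ μ) :
    Compat (sdBracket b₁ ρ) (sdBracket b₂ μ) := by
  have skρ := aux_skp hρ
  have skμ := aux_skp hμ
  have C1p : ∀ x₁ x₂ x₃ x₄ (v : V),
      ρ (b₂ x₁ x₂ x₃) x₄ v + μ (b₁ x₁ x₂ x₃) x₄ v + ρ x₃ (b₂ x₁ x₂ x₄) v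
        + μ x₃ (b₁ x₁ x₂ x₄) v
      = ρ x₁ x₂ (μ x₃ x₄ v) - μ x₃ x₄ (ρ x₁ x₂ v)
        - (ρ x₃ x₄ (μ x₁ x₂ v) - μ x₁ x₂ (ρ x₃ x₄ v)) := by
    intro x₁ x₂ x₃ x₄ v
    simpa [Module.End.mul_apply, LinearMap.add_apply, LinearMap.sub_apply] using
      LinearMap.ext_iff.mp (hcr.1 x₁ x₂ x₃ x₄) v
  have C2p : ∀ x₁ x₂ x₃ x₄ (v : V),
      ρ (b₂ x₁ x₂ x₃) x₄ v + μ (b₁ x₁ x₂ x₃) x₄ v - ρ x₃ x₁ (μ x₂ x₄ v)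
        - μ x₃ x₁ (ρ x₂ x₄ v)
      = ρ x₁ x₂ (μ x₃ x₄ v) + μ x₁ x₂ (ρ x₃ x₄ v) + ρ x₂ x₃ (μ x₁ x₄ v)
        + μ x₂ x₃ (ρ x₁ x₄ v) := by
    intro x₁ x₂ x₃ x₄ v
    simpa [Module.End.mul_apply, LinearMap.add_apply, LinearMap.sub_apply] using
      LinearMap.ext_iff.mp (hcr.2 x₁ x₂ x₃ x₄) v
  have D1 : ∀ x₁ x₂ x₃ x₄ (v : V), ρ x₁ x₂ (μ x₃ x₄ v) =
      ρ (b₂ x₁ x₂ x₃) x₄ v + μ (b₁ x₁ x₂ x₃) x₄ v + ρ x₃ (b₂ x₁ x₂ x₄) v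
        + μ x₃ (b₁ x₁ x₂ x₄) v + μ x₃ x₄ (ρ x₁ x₂ v) + ρ x₃ x₄ (μ x₁ x₂ v)
        - μ x₁ x₂ (ρ x₃ x₄ v) :=
    fun x₁ x₂ x₃ x₄ v => aux_shunt (C1p x₁ x₂ x₃ x₄ v).symm (by abel)
  have D2 : ∀ x₁ x₂ x₃ x₄ (v : V), ρ (b₂ x₁ x₂ x₃) x₄ v =
      ρ x₃ x₁ (μ x₂ x₄ v) + μ x₃ x₁ (ρ x₂ x₄ v) + ρ x₁ x₂ (μ x₃ x₄ v)
        + μ x₁ x₂ (ρ x₃ x₄ v) + ρ x₂ x₃ (μ x₁ x₄ v) + μ x₂ x₃ (ρ x₁ x₄ v)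
        - μ (b₁ x₁ x₂ x₃) x₄ v :=
    fun x₁ x₂ x₃ x₄ v => aux_shunt (C2p x₁ x₂ x₃ x₄ v) (by abel)
  rintro ⟨x₁, v₁⟩ ⟨x₂, v₂⟩ ⟨x₃, v₃⟩ ⟨x₄, v₄⟩ ⟨x₅, v₅⟩
  simp only [sdBracket, Prod.mk_add_mk, Prod.mk.injEq]
  refine ⟨hc x₁ x₂ x₃ x₄ x₅, ?_⟩
  simp only [map_add]
  rw [D1 x₁ x₂ x₃ x₄ v₅, D1 x₁ x₂ x₄ x₅ v₃, D1 x₁ x₂ x₅ x₃ v₄,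
    skρ x₂ (b₂ x₃ x₄ x₅) v₁, D2 x₃ x₄ x₅ x₂ v₁, D2 x₃ x₄ x₅ x₁ v₂,
    skμ x₄ x₂ v₁, skρ x₄ x₂ v₁, skμ x₅ x₂ v₁, skρ x₅ x₂ v₁,
    skμ x₃ x₂ v₁, skρ x₃ x₂ v₁, skμ (b₁ x₃ x₄ x₅) x₂ v₁]
  simp only [map_neg]
  abel

lemma aux_comprep_of (hb₁ : IsTrilinearMap K b₁) (hb₂ : IsTrilinearMap K b₂)
    (hρ : IsRepMap K ρ) (hμ : IsRepMap K μ)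
    (h : Compat (sdBracket b₁ ρ) (sdBracket b₂ μ)) : CompatRep b₁ b₂ ρ μ := by
  obtain ⟨hb0l, hb0m, hb0r⟩ := aux_b_zero hb₁
  obtain ⟨hc0l, hc0m, hc0r⟩ := aux_b_zero hb₂
  have hρ0l : ∀ y, ρ 0 y = 0 := fun y => (hρ.1 y).map_zero
  have hρ0r : ∀ x, ρ x 0 = 0 := fun x => (hρ.2.1 x).map_zero
  have hμ0l : ∀ y, μ 0 y = 0 := fun y => (hμ.1 y).map_zero
  have hμ0r : ∀ x, μ x 0 = 0 := fun x => (hμ.2.1 x).map_zero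
  constructor
  · intro x₁ x₂ x₃ x₄
    ext v
    have e := congrArg Prod.snd (h (x₁, 0) (x₂, 0) (x₃, 0) (x₄, 0) (0, v))
    simp only [sdBracket, Prod.mk_add_mk, hb0l, hb0m, hb0r, hc0l, hc0m, hc0r,
      hρ0l, hρ0r, hμ0l, hμ0r, LinearMap.zero_apply, map_zero, add_zero, zero_add] at e
    simp only [Module.End.mul_apply, LinearMap.add_apply, LinearMap.sub_apply]
    exact aux_shunt e.symm (by abel)
  · intro x₁ x₂ x₃ x₄
    ext v
    have e := congrArg Prod.snd (h (x₄, 0) (0, v) (x₁, 0) (x₂, 0) (x₃, 0))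
    simp only [sdBracket, Prod.mk_add_mk, hb0l, hb0m, hb0r, hc0l, hc0m, hc0r,
      hρ0l, hρ0r, hμ0l, hμ0r, LinearMap.zero_apply, map_zero, add_zero, zero_add] at e
    simp only [Module.End.mul_apply, LinearMap.add_apply, LinearMap.sub_apply]
    exact aux_shunt e (by abel)
end Aux

theorem stmt10 {K G V : Type*} [Field K] [CharZero K] [AddCommGroup G] [Module K G]
    [AddCommGroup V] [Module K V]
    (b₁ b₂ : G → G → G → G) (h₁ : Is3Lie K b₁) (h₂ : Is3Lie K b₂) (hc : Compat b₁ b₂)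
    (ρ μ : G → G → Module.End K V) (hρ : IsRepMap K ρ) (hμ : IsRepMap K μ) :
    (Is3LieRep b₁ ρ ∧ Is3LieRep b₂ μ ∧ CompatRep b₁ b₂ ρ μ) ↔
    (Is3Lie K (sdBracket b₁ ρ) ∧ Is3Lie K (sdBracket b₂ μ) ∧
      Compat (sdBracket b₁ ρ) (sdBracket b₂ μ)) := by
  constructor
  · rintro ⟨r1, r2, rc⟩
    exact ⟨⟨aux_sd_tri h₁.1 hρ, aux_sd_skew h₁.2.1 hρ, aux_sd_fi hρ h₁.2.2 r1⟩,
      ⟨aux_sd_tri h₂.1 hμ, aux_sd_skew h₂.2.1 hμ, aux_sd_fi hμ h₂.2.2 r2⟩,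
      aux_sd_compat hρ hμ hc rc⟩
  · rintro ⟨s1, s2, sc⟩
    exact ⟨aux_rep_of_fi h₁.1 hρ s1.2.2, aux_rep_of_fi h₂.1 hμ s2.2.2,
      aux_comprep_of h₁.1 h₂.1 hρ hμ sc⟩
end

section
/- Let (V;ρ,μ) be a representation of a compatible 3-Lie algebra (g,[·,·,·],{·,·,·}). Define ρ*, μ*: Λ²g → gl(V*) by ⟨ρ*(x₁,x₂)α, v⟩ = −⟨α, ρ(x₁,x₂)v⟩ and ⟨μ*(x₁,x₂)α, v⟩ = −⟨α, μ(x₁,x₂)v⟩. Then (V*; ρ*, μ*) is a representation of the compatible 3-Lie algebra (g,[·,·,·],{·,·,·}). -/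
theorem stmt12 {K G V : Type*} [Field K] [CharZero K] [AddCommGroup G] [Module K G]
    [AddCommGroup V] [Module K V]
    (b₁ b₂ : G → G → G → G) (h₁ : Is3Lie K b₁) (h₂ : Is3Lie K b₂) (hc : Compat b₁ b₂)
    (ρ μ : G → G → Module.End K V) (hρ : IsRepMap K ρ) (hμ : IsRepMap K μ)
    (hrep₁ : Is3LieRep b₁ ρ) (hrep₂ : Is3LieRep b₂ μ) (hrepc : CompatRep b₁ b₂ ρ μ)
    (ρ' μ' : G → G → Module.End K (Module.Dual K V))
    (hρ' : ∀ (x₁ x₂ : G) (α : Module.Dual K V) (v : V),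
      ρ' x₁ x₂ α v = - α (ρ x₁ x₂ v))
    (hμ' : ∀ (x₁ x₂ : G) (α : Module.Dual K V) (v : V),
      μ' x₁ x₂ α v = - α (μ x₁ x₂ v)) :
    IsRepMap K ρ' ∧ IsRepMap K μ' ∧ Is3LieRep b₁ ρ' ∧ Is3LieRep b₂ μ' ∧
      CompatRep b₁ b₂ ρ' μ' := by
  obtain ⟨hρ1, hρ2, hρs⟩ := hρ
  obtain ⟨hμ1, hμ2, hμs⟩ := hμ
  have ext2 : ∀ (f g : Module.End K (Module.Dual K V)), (∀ α v, f α v = g α v) → f = g :=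
    fun f g h => LinearMap.ext fun α => LinearMap.ext fun v => h α v
  have hρneg2 : ∀ z w, ρ z (-w) = -ρ z w := fun z w => (hρ2 z).map_neg w
  have hμneg2 : ∀ z w, μ z (-w) = -μ z w := fun z w => (hμ2 z).map_neg w
  have hρneg1 : ∀ w z, ρ (-w) z = -ρ w z := fun w z => (hρ1 z).map_neg w
  have hμneg1 : ∀ w z, μ (-w) z = -μ w z := fun w z => (hμ1 z).map_neg w
  refine ⟨⟨?_, ?_, ?_⟩, ⟨?_, ?_, ?_⟩, ⟨?_, ?_⟩, ⟨?_, ?_⟩, ?_, ?_⟩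
  -- ρ' linear in first argument
  · intro y
    refine ⟨fun x x' => ext2 _ _ fun α v => ?_, fun c x => ext2 _ _ fun α v => ?_⟩
    · have h := congrArg α (LinearMap.congr_fun ((hρ1 y).map_add x x') v)
      simp only [LinearMap.add_apply, map_add] at h
      simp only [hρ', LinearMap.add_apply]
      linear_combination -h
    · have h := congrArg α (LinearMap.congr_fun ((hρ1 y).map_smul c x) v)
      simp only [LinearMap.smul_apply, map_smul, smul_eq_mul] at h
      simp only [hρ', LinearMap.smul_apply, smul_eq_mul]
      linear_combination -h
  -- ρ' linear in second argument
  · intro x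
    refine ⟨fun y y' => ext2 _ _ fun α v => ?_, fun c y => ext2 _ _ fun α v => ?_⟩
    · have h := congrArg α (LinearMap.congr_fun ((hρ2 x).map_add y y') v)
      simp only [LinearMap.add_apply, map_add] at h
      simp only [hρ', LinearMap.add_apply]
      linear_combination -h
    · have h := congrArg α (LinearMap.congr_fun ((hρ2 x).map_smul c y) v)
      simp only [LinearMap.smul_apply, map_smul, smul_eq_mul] at h
      simp only [hρ', LinearMap.smul_apply, smul_eq_mul]
      linear_combination -h
  -- ρ' skew
  · intro x y
    apply ext2; intro α v
    have h := congrArg α (LinearMap.congr_fun (hρs x y) v)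
    simp only [LinearMap.neg_apply, map_neg] at h
    simp only [hρ', LinearMap.neg_apply, neg_neg]
    linear_combination -h
  -- μ' linear in first argument
  · intro y
    refine ⟨fun x x' => ext2 _ _ fun α v => ?_, fun c x => ext2 _ _ fun α v => ?_⟩
    · have h := congrArg α (LinearMap.congr_fun ((hμ1 y).map_add x x') v)
      simp only [LinearMap.add_apply, map_add] at h
      simp only [hμ', LinearMap.add_apply]
      linear_combination -h
    · have h := congrArg α (LinearMap.congr_fun ((hμ1 y).map_smul c x) v)
      simp only [LinearMap.smul_apply, map_smul, smul_eq_mul] at h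
      simp only [hμ', LinearMap.smul_apply, smul_eq_mul]
      linear_combination -h
  -- μ' linear in second argument
  · intro x
    refine ⟨fun y y' => ext2 _ _ fun α v => ?_, fun c y => ext2 _ _ fun α v => ?_⟩
    · have h := congrArg α (LinearMap.congr_fun ((hμ2 x).map_add y y') v)
      simp only [LinearMap.add_apply, map_add] at h
      simp only [hμ', LinearMap.add_apply]
      linear_combination -h
    · have h := congrArg α (LinearMap.congr_fun ((hμ2 x).map_smul c y) v)
      simp only [LinearMap.smul_apply, map_smul, smul_eq_mul] at h
      simp only [hμ', LinearMap.smul_apply, smul_eq_mul]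
      linear_combination -h
  -- μ' skew
  · intro x y
    apply ext2; intro α v
    have h := congrArg α (LinearMap.congr_fun (hμs x y) v)
    simp only [LinearMap.neg_apply, map_neg] at h
    simp only [hμ', LinearMap.neg_apply, neg_neg]
    linear_combination -h
  -- Is3LieRep b₁ ρ' (i)
  · intro x₁ x₂ x₃ x₄
    apply ext2; intro α v
    have h := congrArg α (LinearMap.congr_fun (hrep₁.1 x₁ x₂ x₃ x₄) v)
    simp only [Module.End.mul_apply, LinearMap.add_apply, map_add] at h
    simp only [Module.End.mul_apply, LinearMap.add_apply, hρ', map_neg, neg_neg]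
    linear_combination -h
  -- Is3LieRep b₁ ρ' (ii)
  · intro x₁ x₂ x₃ x₄
    apply ext2; intro α v
    have c1 : b₁ x₁ x₃ x₂ = -b₁ x₁ x₂ x₃ := by rw [h₁.2.1.2 x₁ x₂ x₃, neg_neg]
    have c2 : b₁ x₁ x₄ x₂ = -b₁ x₁ x₂ x₄ := by rw [h₁.2.1.2 x₁ x₂ x₄, neg_neg]
    have c3 : b₁ x₁ x₄ x₃ = -b₁ x₁ x₃ x₄ := by rw [h₁.2.1.2 x₁ x₃ x₄, neg_neg]
    have c4 : b₁ x₃ x₄ x₁ = b₁ x₁ x₃ x₄ := by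
      rw [h₁.2.1.2 x₃ x₄ x₁, h₁.2.1.1 x₃ x₁ x₄, neg_neg]
    have c5 : b₁ x₃ x₄ x₂ = b₁ x₂ x₃ x₄ := by
      rw [h₁.2.1.2 x₃ x₄ x₂, h₁.2.1.1 x₃ x₂ x₄, neg_neg]
    have Ra := hrep₁.1 x₁ x₂ x₃ x₄
    have Rb := hrep₁.1 x₁ x₃ x₂ x₄
    have Rc := hrep₁.1 x₁ x₄ x₂ x₃
    have Rd := hrep₁.1 x₃ x₄ x₁ x₂
    have Rr := hrep₁.2 x₁ x₂ x₃ x₄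
    rw [c1, hρneg1] at Rb
    rw [c2, hρneg1, c3, hρneg2] at Rc
    rw [c4, c5] at Rd
    rw [show -ρ (b₁ x₁ x₂ x₄) x₃ = ρ x₃ (b₁ x₁ x₂ x₄) by rw [hρs (b₁ x₁ x₂ x₄) x₃, neg_neg]] at Rc
    rw [show ρ (b₁ x₁ x₃ x₄) x₂ = -ρ x₂ (b₁ x₁ x₃ x₄) from hρs (b₁ x₁ x₃ x₄) x₂] at Rd
    have ha := congrArg α (LinearMap.congr_fun Ra v)
    have hb := congrArg α (LinearMap.congr_fun Rb v)
    have hc' := congrArg α (LinearMap.congr_fun Rc v)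
    have hd := congrArg α (LinearMap.congr_fun Rd v)
    have hr := congrArg α (LinearMap.congr_fun Rr v)
    simp only [Module.End.mul_apply, LinearMap.add_apply, LinearMap.sub_apply,
      LinearMap.neg_apply, map_add, map_sub, map_neg] at ha hb hc' hd hr
    simp only [Module.End.mul_apply, LinearMap.add_apply, LinearMap.sub_apply, hρ',
      map_neg, neg_neg]
    linear_combination ha + hb - hc' + 2 * hd + hr
  -- Is3LieRep b₂ μ' (i)
  · intro x₁ x₂ x₃ x₄
    apply ext2; intro α v
    have h := congrArg α (LinearMap.congr_fun (hrep₂.1 x₁ x₂ x₃ x₄) v)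
    simp only [Module.End.mul_apply, LinearMap.add_apply, map_add] at h
    simp only [Module.End.mul_apply, LinearMap.add_apply, hμ', map_neg, neg_neg]
    linear_combination -h
  -- Is3LieRep b₂ μ' (ii)
  · intro x₁ x₂ x₃ x₄
    apply ext2; intro α v
    have c1 : b₂ x₁ x₃ x₂ = -b₂ x₁ x₂ x₃ := by rw [h₂.2.1.2 x₁ x₂ x₃, neg_neg]
    have c2 : b₂ x₁ x₄ x₂ = -b₂ x₁ x₂ x₄ := by rw [h₂.2.1.2 x₁ x₂ x₄, neg_neg]
    have c3 : b₂ x₁ x₄ x₃ = -b₂ x₁ x₃ x₄ := by rw [h₂.2.1.2 x₁ x₃ x₄, neg_neg]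
    have c4 : b₂ x₃ x₄ x₁ = b₂ x₁ x₃ x₄ := by
      rw [h₂.2.1.2 x₃ x₄ x₁, h₂.2.1.1 x₃ x₁ x₄, neg_neg]
    have c5 : b₂ x₃ x₄ x₂ = b₂ x₂ x₃ x₄ := by
      rw [h₂.2.1.2 x₃ x₄ x₂, h₂.2.1.1 x₃ x₂ x₄, neg_neg]
    have Ra := hrep₂.1 x₁ x₂ x₃ x₄
    have Rb := hrep₂.1 x₁ x₃ x₂ x₄
    have Rc := hrep₂.1 x₁ x₄ x₂ x₃
    have Rd := hrep₂.1 x₃ x₄ x₁ x₂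
    have Rr := hrep₂.2 x₁ x₂ x₃ x₄
    rw [c1, hμneg1] at Rb
    rw [c2, hμneg1, c3, hμneg2] at Rc
    rw [c4, c5] at Rd
    rw [show -μ (b₂ x₁ x₂ x₄) x₃ = μ x₃ (b₂ x₁ x₂ x₄) by rw [hμs (b₂ x₁ x₂ x₄) x₃, neg_neg]] at Rc
    rw [show μ (b₂ x₁ x₃ x₄) x₂ = -μ x₂ (b₂ x₁ x₃ x₄) from hμs (b₂ x₁ x₃ x₄) x₂] at Rd
    have ha := congrArg α (LinearMap.congr_fun Ra v)
    have hb := congrArg α (LinearMap.congr_fun Rb v)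
    have hc' := congrArg α (LinearMap.congr_fun Rc v)
    have hd := congrArg α (LinearMap.congr_fun Rd v)
    have hr := congrArg α (LinearMap.congr_fun Rr v)
    simp only [Module.End.mul_apply, LinearMap.add_apply, LinearMap.sub_apply,
      LinearMap.neg_apply, map_add, map_sub, map_neg] at ha hb hc' hd hr
    simp only [Module.End.mul_apply, LinearMap.add_apply, LinearMap.sub_apply, hμ',
      map_neg, neg_neg]
    linear_combination ha + hb - hc' + 2 * hd + hr
  -- CompatRep (i)
  · intro x₁ x₂ x₃ x₄
    apply ext2; intro α v
    have h := congrArg α (LinearMap.congr_fun (hrepc.1 x₁ x₂ x₃ x₄) v)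
    simp only [Module.End.mul_apply, LinearMap.add_apply, LinearMap.sub_apply,
      map_add, map_sub] at h
    simp only [Module.End.mul_apply, LinearMap.add_apply, LinearMap.sub_apply, hρ', hμ',
      map_neg, neg_neg]
    linear_combination -h
  -- CompatRep (ii)
  · intro x₁ x₂ x₃ x₄
    apply ext2; intro α v
    have d1 : b₁ x₃ x₁ x₂ = b₁ x₁ x₂ x₃ := by
      rw [h₁.2.1.1 x₃ x₁ x₂, h₁.2.1.2 x₁ x₃ x₂, neg_neg]
    have d2 : b₂ x₃ x₁ x₂ = b₂ x₁ x₂ x₃ := by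
      rw [h₂.2.1.1 x₃ x₁ x₂, h₂.2.1.2 x₁ x₃ x₂, neg_neg]
    have d3 : b₁ x₃ x₁ x₄ = -b₁ x₁ x₃ x₄ := h₁.2.1.1 x₃ x₁ x₄
    have d4 : b₂ x₃ x₁ x₄ = -b₂ x₁ x₃ x₄ := h₂.2.1.1 x₃ x₁ x₄
    have d5 : b₁ x₃ x₄ x₁ = b₁ x₁ x₃ x₄ := by
      rw [h₁.2.1.2 x₃ x₄ x₁, h₁.2.1.1 x₃ x₁ x₄, neg_neg]
    have d6 : b₂ x₃ x₄ x₁ = b₂ x₁ x₃ x₄ := by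
      rw [h₂.2.1.2 x₃ x₄ x₁, h₂.2.1.1 x₃ x₁ x₄, neg_neg]
    have E1 := hrepc.1 x₃ x₁ x₂ x₄
    have E2 := hrepc.2 x₃ x₄ x₁ x₂
    rw [d2, d1, d4, hρneg2, d3, hμneg2,
      show -ρ x₂ (b₂ x₁ x₃ x₄) = ρ (b₂ x₁ x₃ x₄) x₂ by rw [hρs (b₂ x₁ x₃ x₄) x₂],
      show -μ x₂ (b₁ x₁ x₃ x₄) = μ (b₁ x₁ x₃ x₄) x₂ by rw [hμs (b₁ x₁ x₃ x₄) x₂]] at E1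
    rw [d6, d5, hρs x₁ x₃, hμs x₁ x₃, hμs x₄ x₂, hρs x₄ x₂, hρs x₄ x₁, hμs x₄ x₁,
      hμs x₃ x₂, hρs x₃ x₂] at E2
    simp only [neg_mul, mul_neg, neg_neg, sub_neg_eq_add] at E2
    have e1 := congrArg α (LinearMap.congr_fun E1 v)
    have e2 := congrArg α (LinearMap.congr_fun E2 v)
    simp only [Module.End.mul_apply, LinearMap.add_apply, LinearMap.sub_apply,
      LinearMap.neg_apply, map_add, map_sub, map_neg] at e1 e2
    simp only [Module.End.mul_apply, LinearMap.add_apply, LinearMap.sub_apply, hρ', hμ',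
      map_neg, neg_neg]
    linear_combination e2 - e1
end
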